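/- arXiv:0804.4658 — 5 statements merged into one kernel-verified Lean document; each statement's English description precedes it below -/
import Mathlib

section
/- Let B be an integral domain in which 6 is invertible, and let A be the free B-module with basis {1, t, v₁, v₂, w₁, w₂}, equipped with the S₃-action described in the context. Suppose A carries a commutative, associative B-bilinear multiplication with unit 1 such that every element of S₃ acts as a ring automorphism, and suppose A has no zero divisors (the algebra is integral). Then there exist b₁, b₂, c₁, d₃, d₄, f₃, f₄, h₂ ∈ B satisfying (i) 2b₁d₃ − b₂f₄ + c₁d₄ = 0, (ii) 2b₁f₄ − b₂f₃ + c₁d₃ = 0, and (iii) (b₁² + b₂c₁)h₂ = (3/2)(b₁(d₄f₃ − d₃f₄) + b₂(f₄² − d₃f₃) + c₁(d₄f₄ − d₃²)), such that the multiplication table is: t² = (−3b₁² − 3b₂c₁)·1; t·v₁ = b₁v₁ + b₂v₂ − 2b₁w₁ − 2b₂w₂; t·v₂ = c₁v₁ − b₁v₂ − 2c₁w₁ + 2b₁w₂; t·w₁ = 2b₁v₁ + 2b₂v₂ − b₁w₁ − b₂w₂; t·w₂ = 2c₁v₁ − 2b₁v₂ − c₁w₁ + b₁w₂; v₁² = 6(d₃²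 − d₄f₄)·1 + d₃v₁ + d₄v₂ − 2d₃w₁ − 2d₄w₂; v₁v₂ = 3(d₄f₃ − d₃f₄)·1 − f₄v₁ − d₃v₂ + 2f₄w₁ + 2d₃w₂; v₂² = 6(f₄² − d₃f₃)·1 + f₃v₁ + f₄v₂ − 2f₃w₁ − 2f₄w₂; v₁w₁ = 3(d₃² − d₄f₄)·1 − d₃v₁ − d₄v₂ − d₃w₁ − d₄w₂; v₁w₂ = (3/2)(d₄f₃ − d₃f₄)·1 + h₂t + f₄v₁ + d₃v₂ + f₄w₁ + d₃w₂; v₂w₁ = (3/2)(d₄f₃ − d₃f₄)·1 − h₂t + f₄v₁ + d₃v₂ + f₄w₁ + d₃w₂; v₂w₂ = 3(f₄² − d₃f₃)·1 − f₃v₁ − f₄v₂ − f₃w₁ − f₄w₂; w₁² = 6(d₃² − d₄f₄)·1 − 2d₃v₁ − 2d₄v₂ + d₃w₁ + d₄w₂; w₁w₂ = 3(d₄f₃ − d₃f₄)·1 + 2f₄v₁ + 2d₃v₂ − f₄w₁ − d₃w₂; w₂² = 6(f₄² − d₃f₃)·1 − 2f₃v₁ − 2f₄v₂ + f₃w₁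 + f₄w₂. -/
noncomputable section

/-- A fixed 3-cycle in `S₃ = Equiv.Perm (Fin 3)` (it sends `0 ↦ 1 ↦ 2 ↦ 0`). -/
def σ : Equiv.Perm (Fin 3) := finRotate 3

/-- A fixed transposition in `S₃ = Equiv.Perm (Fin 3)`; it satisfies `τ * σ * τ⁻¹ = σ ^ 2`. -/
def τ : Equiv.Perm (Fin 3) := Equiv.swap 0 1

/-- The standard basis of the free module `A = Fin 6 → B`, with the labelling
`E 0 = 1`, `E 1 = t`, `E 2 = v₁`, `E 3 = v₂`, `E 4 = w₁ (= τv₁)`, `E 5 = w₂ (= τv₂)`. -/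
def E (B : Type*) [CommRing B] (i : Fin 6) : Fin 6 → B := Pi.single i 1

set_option maxHeartbeats 4000000

/-- **Proposition: local structure of integral `S₃`-algebras.**
Let `B` be an integral domain with `6` invertible and `A = B⟨1,t,v₁,v₂,w₁,w₂⟩` the free
`B`-module with the `S₃`-action `σ·1 = τ·1 = 1`, `σ·t = t`, `τ·t = −t`, `σ·vᵢ = −wᵢ`,
`σ·wᵢ = vᵢ − wᵢ`, `τ·vᵢ = wᵢ`, `τ·wᵢ = vᵢ`.  If `m` is a commutative, associative,
`B`-bilinear multiplication on `A` with unit `1`, on which every element of `S₃` acts as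
a ring automorphism, and `A` has no zero divisors, then there are constants
`b₁, b₂, c₁, d₃, d₄, f₃, f₄, h₂ ∈ B` satisfying relations (i)–(iii) such that the
multiplication table is the one displayed below. -/
theorem statement0 (B : Type*) [CommRing B] [IsDomain B] [Invertible (6 : B)]
    (ρ : Equiv.Perm (Fin 3) →* ((Fin 6 → B) ≃ₗ[B] (Fin 6 → B)))
    (hσ0 : ρ σ (E B 0) = E B 0)
    (hσt : ρ σ (E B 1) = E B 1)
    (hσv1 : ρ σ (E B 2) = -E B 4)
    (hσv2 : ρ σ (E B 3) = -E B 5)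
    (hσw1 : ρ σ (E B 4) = E B 2 - E B 4)
    (hσw2 : ρ σ (E B 5) = E B 3 - E B 5)
    (hτ0 : ρ τ (E B 0) = E B 0)
    (hτt : ρ τ (E B 1) = -E B 1)
    (hτv1 : ρ τ (E B 2) = E B 4)
    (hτv2 : ρ τ (E B 3) = E B 5)
    (hτw1 : ρ τ (E B 4) = E B 2)
    (hτw2 : ρ τ (E B 5) = E B 3)
    (m : (Fin 6 → B) →ₗ[B] (Fin 6 → B) →ₗ[B] (Fin 6 → B))
    (hone : ∀ x, m (E B 0) x = x)
    (hcomm : ∀ x y, m x y = m y x)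
    (hassoc : ∀ x y z, m (m x y) z = m x (m y z))
    (hunits : ∀ g : Equiv.Perm (Fin 3), ρ g (E B 0) = E B 0)
    (hequiv : ∀ (g : Equiv.Perm (Fin 3)) (x y : Fin 6 → B),
      ρ g (m x y) = m (ρ g x) (ρ g y))
    (hintegral : ∀ x y : Fin 6 → B, m x y = 0 → x = 0 ∨ y = 0) :
    ∃ b₁ b₂ c₁ d₃ d₄ f₃ f₄ h₂ : B,
      (2 * b₁ * d₃ - b₂ * f₄ + c₁ * d₄ = 0) ∧
      (2 * b₁ * f₄ - b₂ * f₃ + c₁ * d₃ = 0) ∧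
      ((b₁ ^ 2 + b₂ * c₁) * h₂ =
        (9 * ⅟(6 : B)) *
          (b₁ * (d₄ * f₃ - d₃ * f₄) + b₂ * (f₄ ^ 2 - d₃ * f₃) +
            c₁ * (d₄ * f₄ - d₃ ^ 2))) ∧
      m (E B 1) (E B 1) = (-3 * b₁ ^ 2 - 3 * b₂ * c₁) • E B 0 ∧
      m (E B 1) (E B 2) =
        b₁ • E B 2 + b₂ • E B 3 - (2 * b₁) • E B 4 - (2 * b₂) • E B 5 ∧
      m (E B 1) (E B 3) =
        c₁ • E B 2 - b₁ • E B 3 - (2 * c₁) • E B 4 + (2 * b₁) • E B 5 ∧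
      m (E B 1) (E B 4) =
        (2 * b₁) • E B 2 + (2 * b₂) • E B 3 - b₁ • E B 4 - b₂ • E B 5 ∧
      m (E B 1) (E B 5) =
        (2 * c₁) • E B 2 - (2 * b₁) • E B 3 - c₁ • E B 4 + b₁ • E B 5 ∧
      m (E B 2) (E B 2) =
        (6 * (d₃ ^ 2 - d₄ * f₄)) • E B 0 + d₃ • E B 2 + d₄ • E B 3 -
          (2 * d₃) • E B 4 - (2 * d₄) • E B 5 ∧
      m (E B 2) (E B 3) =
        (3 * (d₄ * f₃ - d₃ * f₄)) • E B 0 - f₄ • E B 2 - d₃ • E B 3 +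
          (2 * f₄) • E B 4 + (2 * d₃) • E B 5 ∧
      m (E B 3) (E B 3) =
        (6 * (f₄ ^ 2 - d₃ * f₃)) • E B 0 + f₃ • E B 2 + f₄ • E B 3 -
          (2 * f₃) • E B 4 - (2 * f₄) • E B 5 ∧
      m (E B 2) (E B 4) =
        (3 * (d₃ ^ 2 - d₄ * f₄)) • E B 0 - d₃ • E B 2 - d₄ • E B 3 -
          d₃ • E B 4 - d₄ • E B 5 ∧
      m (E B 2) (E B 5) =
        ((9 * ⅟(6 : B)) * (d₄ * f₃ - d₃ * f₄)) • E B 0 + h₂ • E B 1 +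
          f₄ • E B 2 + d₃ • E B 3 + f₄ • E B 4 + d₃ • E B 5 ∧
      m (E B 3) (E B 4) =
        ((9 * ⅟(6 : B)) * (d₄ * f₃ - d₃ * f₄)) • E B 0 - h₂ • E B 1 +
          f₄ • E B 2 + d₃ • E B 3 + f₄ • E B 4 + d₃ • E B 5 ∧
      m (E B 3) (E B 5) =
        (3 * (f₄ ^ 2 - d₃ * f₃)) • E B 0 - f₃ • E B 2 - f₄ • E B 3 -
          f₃ • E B 4 - f₄ • E B 5 ∧
      m (E B 4) (E B 4) =
        (6 * (d₃ ^ 2 - d₄ * f₄)) • E B 0 - (2 * d₃) • E B 2 - (2 * d₄) • E B 3 +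
          d₃ • E B 4 + d₄ • E B 5 ∧
      m (E B 4) (E B 5) =
        (3 * (d₄ * f₃ - d₃ * f₄)) • E B 0 + (2 * f₄) • E B 2 + (2 * d₃) • E B 3 -
          f₄ • E B 4 - d₃ • E B 5 ∧
      m (E B 5) (E B 5) =
        (6 * (f₄ ^ 2 - d₃ * f₃)) • E B 0 - (2 * f₃) • E B 2 - (2 * f₄) • E B 3 +
          f₃ • E B 4 + f₄ • E B 5
 := by


  have basis : ∀ x : Fin 6 → B,
      x = x 0 • E B 0 + x 1 • E B 1 + x 2 • E B 2 + x 3 • E B 3 + x 4 • E B 4 + x 5 • E B 5 := by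
    intro x; funext j; fin_cases j <;> simp [E, Pi.single_apply]
  have hσx : ∀ x : Fin 6 → B,
      ρ σ x = x 0 • E B 0 + x 1 • E B 1 + x 4 • E B 2 + x 5 • E B 3
        + (-x 2 - x 4) • E B 4 + (-x 3 - x 5) • E B 5 := by
    intro x
    conv_lhs => rw [basis x]
    rw [map_add, map_add, map_add, map_add, map_add,
      map_smul, map_smul, map_smul, map_smul, map_smul, map_smul,
      hσ0, hσt, hσv1, hσv2, hσw1, hσw2]
    funext r
    fin_cases r <;> simp [E, Pi.single_apply] <;> ring
  have hτx : ∀ x : Fin 6 → B,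
      ρ τ x = x 0 • E B 0 + (-x 1) • E B 1 + x 4 • E B 2 + x 5 • E B 3
        + x 2 • E B 4 + x 3 • E B 5 := by
    intro x
    conv_lhs => rw [basis x]
    rw [map_add, map_add, map_add, map_add, map_add,
      map_smul, map_smul, map_smul, map_smul, map_smul, map_smul,
      hτ0, hτt, hτv1, hτv2, hτw1, hτw2]
    funext r
    fin_cases r <;> simp [E, Pi.single_apply] <;> ring
  have hx1 : ∀ (x : Fin 6 → B) (l : Fin 6), m x (E B l)
      = x 0 • E B l + x 1 • m (E B 1) (E B l) + x 2 • m (E B 2) (E B l)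
        + x 3 • m (E B 3) (E B l) + x 4 • m (E B 4) (E B l) + x 5 • m (E B 5) (E B l) := by
    intro x l
    conv_lhs => rw [basis x]
    simp only [map_add, map_smul, LinearMap.add_apply, LinearMap.smul_apply, hone]
  have hx2 : ∀ (i : Fin 6) (y : Fin 6 → B), m (E B i) y
      = y 0 • E B i + y 1 • m (E B i) (E B 1) + y 2 • m (E B i) (E B 2)
        + y 3 • m (E B i) (E B 3) + y 4 • m (E B i) (E B 4) + y 5 • m (E B i) (E B 5) := by
    intro i y
    conv_lhs => rw [basis y]
    simp only [map_add, map_smul]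
    rw [hcomm (E B i) (E B 0), hone]
  have can6 : ∀ x : B, (6:B) * x = 0 → x = 0 := by
    intro x h
    calc x = ⅟(6:B) * (6 * x) := by rw [← mul_assoc, invOf_mul_self, one_mul]
    _ = 0 := by rw [h, mul_zero]
  have can2 : ∀ x : B, (2:B) * x = 0 → x = 0 := fun x h => can6 x (by linear_combination 3*h)
  have can3 : ∀ x : B, (3:B) * x = 0 → x = 0 := fun x h => can6 x (by linear_combination 2*h)
  have half : ∀ x y : B, 2*x = 3*y → x = 9*⅟(6:B)*y := by
    intro x y h
    have h6 : (6:B) * ⅟(6:B) = 1 := mul_invOf_self 6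
    linear_combination 3*⅟(6:B)*h - x*h6
  have Eval : ∀ i j : Fin 6, E B i j = if j = i then 1 else 0 := by
    intro i j; simp [E, Pi.single_apply]
  have hEne : ∀ i : Fin 6, E B i ≠ 0 := by
    intro i h
    exact one_ne_zero (α := B) (by simpa [E] using congrFun h i)

  have hvs_1_1 := hequiv σ (E B 1) (E B 1)
  rw [hσx (m (E B 1) (E B 1)), hσt] at hvs_1_1
  try simp only [map_neg, map_sub, map_add, LinearMap.neg_apply, LinearMap.sub_apply, LinearMap.add_apply, neg_neg] at hvs_1_1
  have Eqs_1_1_2 : -m (E B 1) (E B 1) 2 + m (E B 1) (E B 1) 4 = 0 := by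
    have hh := congrFun hvs_1_1 2
    simp [Eval] at hh
    first
      | linear_combination hh
      | linear_combination -hh
  have Eqs_1_1_3 : -m (E B 1) (E B 1) 3 + m (E B 1) (E B 1) 5 = 0 := by
    have hh := congrFun hvs_1_1 3
    simp [Eval] at hh
    first
      | linear_combination hh
      | linear_combination -hh
  have Eqs_1_1_4 : -m (E B 1) (E B 1) 2 - 2 * m (E B 1) (E B 1) 4 = 0 := by
    have hh := congrFun hvs_1_1 4
    simp [Eval] at hh
    first
      | linear_combination hh
      | linear_combination -hh
  have Eqs_1_1_5 : -m (E B 1) (E B 1) 3 - 2 * m (E B 1) (E B 1) 5 = 0 := by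
    have hh := congrFun hvs_1_1 5
    simp [Eval] at hh
    first
      | linear_combination hh
      | linear_combination -hh
  have hvs_1_2 := hequiv σ (E B 1) (E B 2)
  rw [hσx (m (E B 1) (E B 2)), hσt, hσv1] at hvs_1_2
  try simp only [map_neg, map_sub, map_add, LinearMap.neg_apply, LinearMap.sub_apply, LinearMap.add_apply, neg_neg] at hvs_1_2
  have Eqs_1_2_0 : m (E B 1) (E B 2) 0 + m (E B 1) (E B 4) 0 = 0 := by
    have hh := congrFun hvs_1_2 0
    simp [Eval] at hh
    first
      | linear_combination hh
      | linear_combination -hh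
  have Eqs_1_2_1 : m (E B 1) (E B 2) 1 + m (E B 1) (E B 4) 1 = 0 := by
    have hh := congrFun hvs_1_2 1
    simp [Eval] at hh
    first
      | linear_combination hh
      | linear_combination -hh
  have Eqs_1_2_2 : m (E B 1) (E B 2) 4 + m (E B 1) (E B 4) 2 = 0 := by
    have hh := congrFun hvs_1_2 2
    simp [Eval] at hh
    first
      | linear_combination hh
      | linear_combination -hh
  have Eqs_1_2_3 : m (E B 1) (E B 2) 5 + m (E B 1) (E B 4) 3 = 0 := by
    have hh := congrFun hvs_1_2 3
    simp [Eval] at hh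
    first
      | linear_combination hh
      | linear_combination -hh
  have Eqs_1_2_4 : -m (E B 1) (E B 2) 2 - m (E B 1) (E B 2) 4 + m (E B 1) (E B 4) 4 = 0 := by
    have hh := congrFun hvs_1_2 4
    simp [Eval] at hh
    first
      | linear_combination hh
      | linear_combination -hh
  have Eqs_1_2_5 : -m (E B 1) (E B 2) 3 - m (E B 1) (E B 2) 5 + m (E B 1) (E B 4) 5 = 0 := by
    have hh := congrFun hvs_1_2 5
    simp [Eval] at hh
    first
      | linear_combination hh
      | linear_combination -hh
  have hvs_1_3 := hequiv σ (E B 1) (E B 3)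
  rw [hσx (m (E B 1) (E B 3)), hσt, hσv2] at hvs_1_3
  try simp only [map_neg, map_sub, map_add, LinearMap.neg_apply, LinearMap.sub_apply, LinearMap.add_apply, neg_neg] at hvs_1_3
  have Eqs_1_3_0 : m (E B 1) (E B 3) 0 + m (E B 1) (E B 5) 0 = 0 := by
    have hh := congrFun hvs_1_3 0
    simp [Eval] at hh
    first
      | linear_combination hh
      | linear_combination -hh
  have Eqs_1_3_1 : m (E B 1) (E B 3) 1 + m (E B 1) (E B 5) 1 = 0 := by
    have hh := congrFun hvs_1_3 1
    simp [Eval] at hh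
    first
      | linear_combination hh
      | linear_combination -hh
  have Eqs_1_3_2 : m (E B 1) (E B 3) 4 + m (E B 1) (E B 5) 2 = 0 := by
    have hh := congrFun hvs_1_3 2
    simp [Eval] at hh
    first
      | linear_combination hh
      | linear_combination -hh
  have Eqs_1_3_3 : m (E B 1) (E B 3) 5 + m (E B 1) (E B 5) 3 = 0 := by
    have hh := congrFun hvs_1_3 3
    simp [Eval] at hh
    first
      | linear_combination hh
      | linear_combination -hh
  have Eqs_1_3_4 : -m (E B 1) (E B 3) 2 - m (E B 1) (E B 3) 4 + m (E B 1) (E B 5) 4 = 0 := by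
    have hh := congrFun hvs_1_3 4
    simp [Eval] at hh
    first
      | linear_combination hh
      | linear_combination -hh
  have Eqs_1_3_5 : -m (E B 1) (E B 3) 3 - m (E B 1) (E B 3) 5 + m (E B 1) (E B 5) 5 = 0 := by
    have hh := congrFun hvs_1_3 5
    simp [Eval] at hh
    first
      | linear_combination hh
      | linear_combination -hh
  have hvs_1_4 := hequiv σ (E B 1) (E B 4)
  rw [hσx (m (E B 1) (E B 4)), hσt, hσw1] at hvs_1_4
  try simp only [map_neg, map_sub, map_add, LinearMap.neg_apply, LinearMap.sub_apply, LinearMap.add_apply, neg_neg] at hvs_1_4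
  have Eqs_1_4_0 : -m (E B 1) (E B 2) 0 + 2 * m (E B 1) (E B 4) 0 = 0 := by
    have hh := congrFun hvs_1_4 0
    simp [Eval] at hh
    first
      | linear_combination hh
      | linear_combination -hh
  have Eqs_1_4_1 : -m (E B 1) (E B 2) 1 + 2 * m (E B 1) (E B 4) 1 = 0 := by
    have hh := congrFun hvs_1_4 1
    simp [Eval] at hh
    first
      | linear_combination hh
      | linear_combination -hh
  have hvs_1_5 := hequiv σ (E B 1) (E B 5)
  rw [hσx (m (E B 1) (E B 5)), hσt, hσw2] at hvs_1_5
  try simp only [map_neg, map_sub, map_add, LinearMap.neg_apply, LinearMap.sub_apply, LinearMap.add_apply, neg_neg] at hvs_1_5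
  have Eqs_1_5_0 : -m (E B 1) (E B 3) 0 + 2 * m (E B 1) (E B 5) 0 = 0 := by
    have hh := congrFun hvs_1_5 0
    simp [Eval] at hh
    first
      | linear_combination hh
      | linear_combination -hh
  have Eqs_1_5_1 : -m (E B 1) (E B 3) 1 + 2 * m (E B 1) (E B 5) 1 = 0 := by
    have hh := congrFun hvs_1_5 1
    simp [Eval] at hh
    first
      | linear_combination hh
      | linear_combination -hh
  have hvs_2_2 := hequiv σ (E B 2) (E B 2)
  rw [hσx (m (E B 2) (E B 2)), hσv1] at hvs_2_2
  try simp only [map_neg, map_sub, map_add, LinearMap.neg_apply, LinearMap.sub_apply, LinearMap.add_apply, neg_neg] at hvs_2_2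
  have Eqs_2_2_0 : m (E B 2) (E B 2) 0 - m (E B 4) (E B 4) 0 = 0 := by
    have hh := congrFun hvs_2_2 0
    simp [Eval] at hh
    first
      | linear_combination hh
      | linear_combination -hh
  have Eqs_2_2_1 : m (E B 2) (E B 2) 1 - m (E B 4) (E B 4) 1 = 0 := by
    have hh := congrFun hvs_2_2 1
    simp [Eval] at hh
    first
      | linear_combination hh
      | linear_combination -hh
  have Eqs_2_2_2 : m (E B 2) (E B 2) 4 - m (E B 4) (E B 4) 2 = 0 := by
    have hh := congrFun hvs_2_2 2
    simp [Eval] at hh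
    first
      | linear_combination hh
      | linear_combination -hh
  have Eqs_2_2_3 : m (E B 2) (E B 2) 5 - m (E B 4) (E B 4) 3 = 0 := by
    have hh := congrFun hvs_2_2 3
    simp [Eval] at hh
    first
      | linear_combination hh
      | linear_combination -hh
  have Eqs_2_2_4 : -m (E B 2) (E B 2) 2 - m (E B 2) (E B 2) 4 - m (E B 4) (E B 4) 4 = 0 := by
    have hh := congrFun hvs_2_2 4
    simp [Eval] at hh
    first
      | linear_combination hh
      | linear_combination -hh
  have Eqs_2_2_5 : -m (E B 2) (E B 2) 3 - m (E B 2) (E B 2) 5 - m (E B 4) (E B 4) 5 = 0 := by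
    have hh := congrFun hvs_2_2 5
    simp [Eval] at hh
    first
      | linear_combination hh
      | linear_combination -hh
  have hvs_2_3 := hequiv σ (E B 2) (E B 3)
  rw [hσx (m (E B 2) (E B 3)), hσv1, hσv2] at hvs_2_3
  try simp only [map_neg, map_sub, map_add, LinearMap.neg_apply, LinearMap.sub_apply, LinearMap.add_apply, neg_neg] at hvs_2_3
  have Eqs_2_3_0 : m (E B 2) (E B 3) 0 - m (E B 4) (E B 5) 0 = 0 := by
    have hh := congrFun hvs_2_3 0
    simp [Eval] at hh
    first
      | linear_combination hh
      | linear_combination -hh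
  have Eqs_2_3_1 : m (E B 2) (E B 3) 1 - m (E B 4) (E B 5) 1 = 0 := by
    have hh := congrFun hvs_2_3 1
    simp [Eval] at hh
    first
      | linear_combination hh
      | linear_combination -hh
  have Eqs_2_3_2 : m (E B 2) (E B 3) 4 - m (E B 4) (E B 5) 2 = 0 := by
    have hh := congrFun hvs_2_3 2
    simp [Eval] at hh
    first
      | linear_combination hh
      | linear_combination -hh
  have Eqs_2_3_3 : m (E B 2) (E B 3) 5 - m (E B 4) (E B 5) 3 = 0 := by
    have hh := congrFun hvs_2_3 3
    simp [Eval] at hh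
    first
      | linear_combination hh
      | linear_combination -hh
  have Eqs_2_3_4 : -m (E B 2) (E B 3) 2 - m (E B 2) (E B 3) 4 - m (E B 4) (E B 5) 4 = 0 := by
    have hh := congrFun hvs_2_3 4
    simp [Eval] at hh
    first
      | linear_combination hh
      | linear_combination -hh
  have Eqs_2_3_5 : -m (E B 2) (E B 3) 3 - m (E B 2) (E B 3) 5 - m (E B 4) (E B 5) 5 = 0 := by
    have hh := congrFun hvs_2_3 5
    simp [Eval] at hh
    first
      | linear_combination hh
      | linear_combination -hh
  have hvs_2_4 := hequiv σ (E B 2) (E B 4)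
  rw [hσx (m (E B 2) (E B 4)), hσv1, hσw1] at hvs_2_4
  try simp only [map_neg, map_sub, map_add, LinearMap.neg_apply, LinearMap.sub_apply, LinearMap.add_apply, neg_neg] at hvs_2_4
  rw [hcomm (E B 4) (E B 2)] at hvs_2_4
  have Eqs_2_4_0 : 2 * m (E B 2) (E B 4) 0 - m (E B 4) (E B 4) 0 = 0 := by
    have hh := congrFun hvs_2_4 0
    simp [Eval] at hh
    first
      | linear_combination hh
      | linear_combination -hh
  have Eqs_2_4_1 : 2 * m (E B 2) (E B 4) 1 - m (E B 4) (E B 4) 1 = 0 := by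
    have hh := congrFun hvs_2_4 1
    simp [Eval] at hh
    first
      | linear_combination hh
      | linear_combination -hh
  have Eqs_2_4_2 : m (E B 2) (E B 4) 2 + m (E B 2) (E B 4) 4 - m (E B 4) (E B 4) 2 = 0 := by
    have hh := congrFun hvs_2_4 2
    simp [Eval] at hh
    first
      | linear_combination hh
      | linear_combination -hh
  have Eqs_2_4_3 : m (E B 2) (E B 4) 3 + m (E B 2) (E B 4) 5 - m (E B 4) (E B 4) 3 = 0 := by
    have hh := congrFun hvs_2_4 3
    simp [Eval] at hh
    first
      | linear_combination hh
      | linear_combination -hh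
  have Eqs_2_4_4 : -m (E B 2) (E B 4) 2 - m (E B 4) (E B 4) 4 = 0 := by
    have hh := congrFun hvs_2_4 4
    simp [Eval] at hh
    first
      | linear_combination hh
      | linear_combination -hh
  have Eqs_2_4_5 : -m (E B 2) (E B 4) 3 - m (E B 4) (E B 4) 5 = 0 := by
    have hh := congrFun hvs_2_4 5
    simp [Eval] at hh
    first
      | linear_combination hh
      | linear_combination -hh
  have hvs_2_5 := hequiv σ (E B 2) (E B 5)
  rw [hσx (m (E B 2) (E B 5)), hσv1, hσw2] at hvs_2_5
  try simp only [map_neg, map_sub, map_add, LinearMap.neg_apply, LinearMap.sub_apply, LinearMap.add_apply, neg_neg] at hvs_2_5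
  rw [hcomm (E B 4) (E B 3)] at hvs_2_5
  have Eqs_2_5_0 : m (E B 2) (E B 5) 0 + m (E B 3) (E B 4) 0 - m (E B 4) (E B 5) 0 = 0 := by
    have hh := congrFun hvs_2_5 0
    simp [Eval] at hh
    first
      | linear_combination hh
      | linear_combination -hh
  have Eqs_2_5_1 : m (E B 2) (E B 5) 1 + m (E B 3) (E B 4) 1 - m (E B 4) (E B 5) 1 = 0 := by
    have hh := congrFun hvs_2_5 1
    simp [Eval] at hh
    first
      | linear_combination hh
      | linear_combination -hh
  have Eqs_2_5_2 : m (E B 2) (E B 5) 4 + m (E B 3) (E B 4) 2 - m (E B 4) (E B 5) 2 = 0 := by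
    have hh := congrFun hvs_2_5 2
    simp [Eval] at hh
    first
      | linear_combination hh
      | linear_combination -hh
  have Eqs_2_5_3 : m (E B 2) (E B 5) 5 + m (E B 3) (E B 4) 3 - m (E B 4) (E B 5) 3 = 0 := by
    have hh := congrFun hvs_2_5 3
    simp [Eval] at hh
    first
      | linear_combination hh
      | linear_combination -hh
  have Eqs_2_5_4 : -m (E B 2) (E B 5) 2 - m (E B 2) (E B 5) 4 + m (E B 3) (E B 4) 4 - m (E B 4) (E B 5) 4 = 0 := by
    have hh := congrFun hvs_2_5 4
    simp [Eval] at hh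
    first
      | linear_combination hh
      | linear_combination -hh
  have Eqs_2_5_5 : -m (E B 2) (E B 5) 3 - m (E B 2) (E B 5) 5 + m (E B 3) (E B 4) 5 - m (E B 4) (E B 5) 5 = 0 := by
    have hh := congrFun hvs_2_5 5
    simp [Eval] at hh
    first
      | linear_combination hh
      | linear_combination -hh
  have hvs_3_3 := hequiv σ (E B 3) (E B 3)
  rw [hσx (m (E B 3) (E B 3)), hσv2] at hvs_3_3
  try simp only [map_neg, map_sub, map_add, LinearMap.neg_apply, LinearMap.sub_apply, LinearMap.add_apply, neg_neg] at hvs_3_3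
  have Eqs_3_3_0 : m (E B 3) (E B 3) 0 - m (E B 5) (E B 5) 0 = 0 := by
    have hh := congrFun hvs_3_3 0
    simp [Eval] at hh
    first
      | linear_combination hh
      | linear_combination -hh
  have Eqs_3_3_1 : m (E B 3) (E B 3) 1 - m (E B 5) (E B 5) 1 = 0 := by
    have hh := congrFun hvs_3_3 1
    simp [Eval] at hh
    first
      | linear_combination hh
      | linear_combination -hh
  have Eqs_3_3_2 : m (E B 3) (E B 3) 4 - m (E B 5) (E B 5) 2 = 0 := by
    have hh := congrFun hvs_3_3 2
    simp [Eval] at hh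
    first
      | linear_combination hh
      | linear_combination -hh
  have Eqs_3_3_3 : m (E B 3) (E B 3) 5 - m (E B 5) (E B 5) 3 = 0 := by
    have hh := congrFun hvs_3_3 3
    simp [Eval] at hh
    first
      | linear_combination hh
      | linear_combination -hh
  have Eqs_3_3_4 : -m (E B 3) (E B 3) 2 - m (E B 3) (E B 3) 4 - m (E B 5) (E B 5) 4 = 0 := by
    have hh := congrFun hvs_3_3 4
    simp [Eval] at hh
    first
      | linear_combination hh
      | linear_combination -hh
  have Eqs_3_3_5 : -m (E B 3) (E B 3) 3 - m (E B 3) (E B 3) 5 - m (E B 5) (E B 5) 5 = 0 := by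
    have hh := congrFun hvs_3_3 5
    simp [Eval] at hh
    first
      | linear_combination hh
      | linear_combination -hh
  have hvs_3_4 := hequiv σ (E B 3) (E B 4)
  rw [hσx (m (E B 3) (E B 4)), hσv2, hσw1] at hvs_3_4
  try simp only [map_neg, map_sub, map_add, LinearMap.neg_apply, LinearMap.sub_apply, LinearMap.add_apply, neg_neg] at hvs_3_4
  rw [hcomm (E B 5) (E B 2)] at hvs_3_4
  rw [hcomm (E B 5) (E B 4)] at hvs_3_4
  have Eqs_3_4_2 : m (E B 2) (E B 5) 2 + m (E B 3) (E B 4) 4 - m (E B 4) (E B 5) 2 = 0 := by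
    have hh := congrFun hvs_3_4 2
    simp [Eval] at hh
    first
      | linear_combination hh
      | linear_combination -hh
  have Eqs_3_4_3 : m (E B 2) (E B 5) 3 + m (E B 3) (E B 4) 5 - m (E B 4) (E B 5) 3 = 0 := by
    have hh := congrFun hvs_3_4 3
    simp [Eval] at hh
    first
      | linear_combination hh
      | linear_combination -hh
  have Eqs_3_4_4 : m (E B 2) (E B 5) 4 - m (E B 3) (E B 4) 2 - m (E B 3) (E B 4) 4 - m (E B 4) (E B 5) 4 = 0 := by
    have hh := congrFun hvs_3_4 4
    simp [Eval] at hh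
    first
      | linear_combination hh
      | linear_combination -hh
  have Eqs_3_4_5 : m (E B 2) (E B 5) 5 - m (E B 3) (E B 4) 3 - m (E B 3) (E B 4) 5 - m (E B 4) (E B 5) 5 = 0 := by
    have hh := congrFun hvs_3_4 5
    simp [Eval] at hh
    first
      | linear_combination hh
      | linear_combination -hh
  have hvs_3_5 := hequiv σ (E B 3) (E B 5)
  rw [hσx (m (E B 3) (E B 5)), hσv2, hσw2] at hvs_3_5
  try simp only [map_neg, map_sub, map_add, LinearMap.neg_apply, LinearMap.sub_apply, LinearMap.add_apply, neg_neg] at hvs_3_5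
  rw [hcomm (E B 5) (E B 3)] at hvs_3_5
  have Eqs_3_5_0 : 2 * m (E B 3) (E B 5) 0 - m (E B 5) (E B 5) 0 = 0 := by
    have hh := congrFun hvs_3_5 0
    simp [Eval] at hh
    first
      | linear_combination hh
      | linear_combination -hh
  have Eqs_3_5_1 : 2 * m (E B 3) (E B 5) 1 - m (E B 5) (E B 5) 1 = 0 := by
    have hh := congrFun hvs_3_5 1
    simp [Eval] at hh
    first
      | linear_combination hh
      | linear_combination -hh
  have Eqs_3_5_2 : m (E B 3) (E B 5) 2 + m (E B 3) (E B 5) 4 - m (E B 5) (E B 5) 2 = 0 := by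
    have hh := congrFun hvs_3_5 2
    simp [Eval] at hh
    first
      | linear_combination hh
      | linear_combination -hh
  have Eqs_3_5_3 : m (E B 3) (E B 5) 3 + m (E B 3) (E B 5) 5 - m (E B 5) (E B 5) 3 = 0 := by
    have hh := congrFun hvs_3_5 3
    simp [Eval] at hh
    first
      | linear_combination hh
      | linear_combination -hh
  have Eqs_3_5_4 : -m (E B 3) (E B 5) 2 - m (E B 5) (E B 5) 4 = 0 := by
    have hh := congrFun hvs_3_5 4
    simp [Eval] at hh
    first
      | linear_combination hh
      | linear_combination -hh
  have Eqs_3_5_5 : -m (E B 3) (E B 5) 3 - m (E B 5) (E B 5) 5 = 0 := by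
    have hh := congrFun hvs_3_5 5
    simp [Eval] at hh
    first
      | linear_combination hh
      | linear_combination -hh
  have hvt_1_1 := hequiv τ (E B 1) (E B 1)
  rw [hτx (m (E B 1) (E B 1)), hτt] at hvt_1_1
  try simp only [map_neg, map_sub, map_add, LinearMap.neg_apply, LinearMap.sub_apply, LinearMap.add_apply, neg_neg] at hvt_1_1
  have Eqt_1_1_1 : -2 * m (E B 1) (E B 1) 1 = 0 := by
    have hh := congrFun hvt_1_1 1
    simp [Eval] at hh
    first
      | linear_combination hh
      | linear_combination -hh
  have hvt_1_2 := hequiv τ (E B 1) (E B 2)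
  rw [hτx (m (E B 1) (E B 2)), hτt, hτv1] at hvt_1_2
  try simp only [map_neg, map_sub, map_add, LinearMap.neg_apply, LinearMap.sub_apply, LinearMap.add_apply, neg_neg] at hvt_1_2
  have Eqt_1_2_4 : m (E B 1) (E B 2) 2 + m (E B 1) (E B 4) 4 = 0 := by
    have hh := congrFun hvt_1_2 4
    simp [Eval] at hh
    first
      | linear_combination hh
      | linear_combination -hh
  have Eqt_1_2_5 : m (E B 1) (E B 2) 3 + m (E B 1) (E B 4) 5 = 0 := by
    have hh := congrFun hvt_1_2 5
    simp [Eval] at hh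
    first
      | linear_combination hh
      | linear_combination -hh
  have hvt_1_3 := hequiv τ (E B 1) (E B 3)
  rw [hτx (m (E B 1) (E B 3)), hτt, hτv2] at hvt_1_3
  try simp only [map_neg, map_sub, map_add, LinearMap.neg_apply, LinearMap.sub_apply, LinearMap.add_apply, neg_neg] at hvt_1_3
  have Eqt_1_3_4 : m (E B 1) (E B 3) 2 + m (E B 1) (E B 5) 4 = 0 := by
    have hh := congrFun hvt_1_3 4
    simp [Eval] at hh
    first
      | linear_combination hh
      | linear_combination -hh
  have Eqt_1_3_5 : m (E B 1) (E B 3) 3 + m (E B 1) (E B 5) 5 = 0 := by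
    have hh := congrFun hvt_1_3 5
    simp [Eval] at hh
    first
      | linear_combination hh
      | linear_combination -hh
  have hvt_2_2 := hequiv τ (E B 2) (E B 2)
  rw [hτx (m (E B 2) (E B 2)), hτv1] at hvt_2_2
  try simp only [map_neg, map_sub, map_add, LinearMap.neg_apply, LinearMap.sub_apply, LinearMap.add_apply, neg_neg] at hvt_2_2
  have Eqt_2_2_1 : -m (E B 2) (E B 2) 1 - m (E B 4) (E B 4) 1 = 0 := by
    have hh := congrFun hvt_2_2 1
    simp [Eval] at hh
    first
      | linear_combination hh
      | linear_combination -hh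
  have Eqt_2_2_4 : m (E B 2) (E B 2) 2 - m (E B 4) (E B 4) 4 = 0 := by
    have hh := congrFun hvt_2_2 4
    simp [Eval] at hh
    first
      | linear_combination hh
      | linear_combination -hh
  have Eqt_2_2_5 : m (E B 2) (E B 2) 3 - m (E B 4) (E B 4) 5 = 0 := by
    have hh := congrFun hvt_2_2 5
    simp [Eval] at hh
    first
      | linear_combination hh
      | linear_combination -hh
  have hvt_2_3 := hequiv τ (E B 2) (E B 3)
  rw [hτx (m (E B 2) (E B 3)), hτv1, hτv2] at hvt_2_3
  try simp only [map_neg, map_sub, map_add, LinearMap.neg_apply, LinearMap.sub_apply, LinearMap.add_apply, neg_neg] at hvt_2_3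
  have Eqt_2_3_1 : -m (E B 2) (E B 3) 1 - m (E B 4) (E B 5) 1 = 0 := by
    have hh := congrFun hvt_2_3 1
    simp [Eval] at hh
    first
      | linear_combination hh
      | linear_combination -hh
  have Eqt_2_3_4 : m (E B 2) (E B 3) 2 - m (E B 4) (E B 5) 4 = 0 := by
    have hh := congrFun hvt_2_3 4
    simp [Eval] at hh
    first
      | linear_combination hh
      | linear_combination -hh
  have Eqt_2_3_5 : m (E B 2) (E B 3) 3 - m (E B 4) (E B 5) 5 = 0 := by
    have hh := congrFun hvt_2_3 5
    simp [Eval] at hh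
    first
      | linear_combination hh
      | linear_combination -hh
  have hvt_2_5 := hequiv τ (E B 2) (E B 5)
  rw [hτx (m (E B 2) (E B 5)), hτv1, hτw2] at hvt_2_5
  try simp only [map_neg, map_sub, map_add, LinearMap.neg_apply, LinearMap.sub_apply, LinearMap.add_apply, neg_neg] at hvt_2_5
  rw [hcomm (E B 4) (E B 3)] at hvt_2_5
  have Eqt_2_5_0 : m (E B 2) (E B 5) 0 - m (E B 3) (E B 4) 0 = 0 := by
    have hh := congrFun hvt_2_5 0
    simp [Eval] at hh
    first
      | linear_combination hh
      | linear_combination -hh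
  have hvt_3_3 := hequiv τ (E B 3) (E B 3)
  rw [hτx (m (E B 3) (E B 3)), hτv2] at hvt_3_3
  try simp only [map_neg, map_sub, map_add, LinearMap.neg_apply, LinearMap.sub_apply, LinearMap.add_apply, neg_neg] at hvt_3_3
  have Eqt_3_3_1 : -m (E B 3) (E B 3) 1 - m (E B 5) (E B 5) 1 = 0 := by
    have hh := congrFun hvt_3_3 1
    simp [Eval] at hh
    first
      | linear_combination hh
      | linear_combination -hh
  have Eqt_3_3_4 : m (E B 3) (E B 3) 2 - m (E B 5) (E B 5) 4 = 0 := by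
    have hh := congrFun hvt_3_3 4
    simp [Eval] at hh
    first
      | linear_combination hh
      | linear_combination -hh
  have Eqt_3_3_5 : m (E B 3) (E B 3) 3 - m (E B 5) (E B 5) 5 = 0 := by
    have hh := congrFun hvt_3_3 5
    simp [Eval] at hh
    first
      | linear_combination hh
      | linear_combination -hh
  have L_1_1_10 : (2:B) * (m (E B 1) (E B 1) 1 - (0)) = 0 := by linear_combination (-1) * Eqt_1_1_1
  have L_1_1_11 : m (E B 1) (E B 1) 1 - (0) = 0 := can2 _ (by linear_combination L_1_1_10)
  have L_1_1_1 : m (E B 1) (E B 1) 1 = 0 := by linear_combination L_1_1_11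
  have L_1_1_20 : (3:B) * (m (E B 1) (E B 1) 2 - (0)) = 0 := by linear_combination (-2) * Eqs_1_1_2 + (-1) * Eqs_1_1_4
  have L_1_1_21 : m (E B 1) (E B 1) 2 - (0) = 0 := can3 _ (by linear_combination L_1_1_20)
  have L_1_1_2 : m (E B 1) (E B 1) 2 = 0 := by linear_combination L_1_1_21
  have L_1_1_30 : (3:B) * (m (E B 1) (E B 1) 3 - (0)) = 0 := by linear_combination (-2) * Eqs_1_1_3 + (-1) * Eqs_1_1_5
  have L_1_1_31 : m (E B 1) (E B 1) 3 - (0) = 0 := can3 _ (by linear_combination L_1_1_30)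
  have L_1_1_3 : m (E B 1) (E B 1) 3 = 0 := by linear_combination L_1_1_31
  have L_1_1_40 : (3:B) * (m (E B 1) (E B 1) 4 - (0)) = 0 := by linear_combination (1) * Eqs_1_1_2 + (-1) * Eqs_1_1_4
  have L_1_1_41 : m (E B 1) (E B 1) 4 - (0) = 0 := can3 _ (by linear_combination L_1_1_40)
  have L_1_1_4 : m (E B 1) (E B 1) 4 = 0 := by linear_combination L_1_1_41
  have L_1_1_50 : (3:B) * (m (E B 1) (E B 1) 5 - (0)) = 0 := by linear_combination (1) * Eqs_1_1_3 + (-1) * Eqs_1_1_5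
  have L_1_1_51 : m (E B 1) (E B 1) 5 - (0) = 0 := can3 _ (by linear_combination L_1_1_50)
  have L_1_1_5 : m (E B 1) (E B 1) 5 = 0 := by linear_combination L_1_1_51
  have L_1_2_00 : (3:B) * (m (E B 1) (E B 2) 0 - (0)) = 0 := by linear_combination (2) * Eqs_1_2_0 + (-1) * Eqs_1_4_0
  have L_1_2_01 : m (E B 1) (E B 2) 0 - (0) = 0 := can3 _ (by linear_combination L_1_2_00)
  have L_1_2_0 : m (E B 1) (E B 2) 0 = 0 := by linear_combination L_1_2_01
  have L_1_2_10 : (3:B) * (m (E B 1) (E B 2) 1 - (0)) = 0 := by linear_combination (2) * Eqs_1_2_1 + (-1) * Eqs_1_4_1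
  have L_1_2_11 : m (E B 1) (E B 2) 1 - (0) = 0 := can3 _ (by linear_combination L_1_2_10)
  have L_1_2_1 : m (E B 1) (E B 2) 1 = 0 := by linear_combination L_1_2_11
  have L_1_2_4 : m (E B 1) (E B 2) 4 = -2 * m (E B 1) (E B 2) 2 := by linear_combination (-1) * Eqs_1_2_4 + (1) * Eqt_1_2_4
  have L_1_2_5 : m (E B 1) (E B 2) 5 = -2 * m (E B 1) (E B 2) 3 := by linear_combination (-1) * Eqs_1_2_5 + (1) * Eqt_1_2_5
  have L_1_3_00 : (3:B) * (m (E B 1) (E B 3) 0 - (0)) = 0 := by linear_combination (2) * Eqs_1_3_0 + (-1) * Eqs_1_5_0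
  have L_1_3_01 : m (E B 1) (E B 3) 0 - (0) = 0 := can3 _ (by linear_combination L_1_3_00)
  have L_1_3_0 : m (E B 1) (E B 3) 0 = 0 := by linear_combination L_1_3_01
  have L_1_3_10 : (3:B) * (m (E B 1) (E B 3) 1 - (0)) = 0 := by linear_combination (2) * Eqs_1_3_1 + (-1) * Eqs_1_5_1
  have L_1_3_11 : m (E B 1) (E B 3) 1 - (0) = 0 := can3 _ (by linear_combination L_1_3_10)
  have L_1_3_1 : m (E B 1) (E B 3) 1 = 0 := by linear_combination L_1_3_11
  have L_1_3_4 : m (E B 1) (E B 3) 4 = -2 * m (E B 1) (E B 3) 2 := by linear_combination (-1) * Eqs_1_3_4 + (1) * Eqt_1_3_4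
  have L_1_3_5 : m (E B 1) (E B 3) 5 = -2 * m (E B 1) (E B 3) 3 := by linear_combination (-1) * Eqs_1_3_5 + (1) * Eqt_1_3_5
  have L_1_4_00 : (3:B) * (m (E B 1) (E B 4) 0 - (0)) = 0 := by linear_combination (1) * Eqs_1_2_0 + (1) * Eqs_1_4_0
  have L_1_4_01 : m (E B 1) (E B 4) 0 - (0) = 0 := can3 _ (by linear_combination L_1_4_00)
  have L_1_4_0 : m (E B 1) (E B 4) 0 = 0 := by linear_combination L_1_4_01
  have L_1_4_10 : (3:B) * (m (E B 1) (E B 4) 1 - (0)) = 0 := by linear_combination (1) * Eqs_1_2_1 + (1) * Eqs_1_4_1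
  have L_1_4_11 : m (E B 1) (E B 4) 1 - (0) = 0 := can3 _ (by linear_combination L_1_4_10)
  have L_1_4_1 : m (E B 1) (E B 4) 1 = 0 := by linear_combination L_1_4_11
  have L_1_4_2 : m (E B 1) (E B 4) 2 = 2 * m (E B 1) (E B 2) 2 := by linear_combination (1) * Eqs_1_2_2 + (1) * Eqs_1_2_4 + (-1) * Eqt_1_2_4
  have L_1_4_3 : m (E B 1) (E B 4) 3 = 2 * m (E B 1) (E B 2) 3 := by linear_combination (1) * Eqs_1_2_3 + (1) * Eqs_1_2_5 + (-1) * Eqt_1_2_5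
  have L_1_4_4 : m (E B 1) (E B 4) 4 = -m (E B 1) (E B 2) 2 := by linear_combination (1) * Eqt_1_2_4
  have L_1_4_5 : m (E B 1) (E B 4) 5 = -m (E B 1) (E B 2) 3 := by linear_combination (1) * Eqt_1_2_5
  have L_1_5_00 : (3:B) * (m (E B 1) (E B 5) 0 - (0)) = 0 := by linear_combination (1) * Eqs_1_3_0 + (1) * Eqs_1_5_0
  have L_1_5_01 : m (E B 1) (E B 5) 0 - (0) = 0 := can3 _ (by linear_combination L_1_5_00)
  have L_1_5_0 : m (E B 1) (E B 5) 0 = 0 := by linear_combination L_1_5_01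
  have L_1_5_10 : (3:B) * (m (E B 1) (E B 5) 1 - (0)) = 0 := by linear_combination (1) * Eqs_1_3_1 + (1) * Eqs_1_5_1
  have L_1_5_11 : m (E B 1) (E B 5) 1 - (0) = 0 := can3 _ (by linear_combination L_1_5_10)
  have L_1_5_1 : m (E B 1) (E B 5) 1 = 0 := by linear_combination L_1_5_11
  have L_1_5_2 : m (E B 1) (E B 5) 2 = 2 * m (E B 1) (E B 3) 2 := by linear_combination (1) * Eqs_1_3_2 + (1) * Eqs_1_3_4 + (-1) * Eqt_1_3_4
  have L_1_5_3 : m (E B 1) (E B 5) 3 = 2 * m (E B 1) (E B 3) 3 := by linear_combination (1) * Eqs_1_3_3 + (1) * Eqs_1_3_5 + (-1) * Eqt_1_3_5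
  have L_1_5_4 : m (E B 1) (E B 5) 4 = -m (E B 1) (E B 3) 2 := by linear_combination (1) * Eqt_1_3_4
  have L_1_5_5 : m (E B 1) (E B 5) 5 = -m (E B 1) (E B 3) 3 := by linear_combination (1) * Eqt_1_3_5
  have L_2_2_0 : m (E B 2) (E B 2) 0 = 2 * m (E B 2) (E B 4) 0 := by linear_combination (1) * Eqs_2_2_0 + (-1) * Eqs_2_4_0
  have L_2_2_10 : (2:B) * (m (E B 2) (E B 2) 1 - (0)) = 0 := by linear_combination (1) * Eqs_2_2_1 + (-1) * Eqt_2_2_1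
  have L_2_2_11 : m (E B 2) (E B 2) 1 - (0) = 0 := can2 _ (by linear_combination L_2_2_10)
  have L_2_2_1 : m (E B 2) (E B 2) 1 = 0 := by linear_combination L_2_2_11
  have L_2_2_4 : m (E B 2) (E B 2) 4 = -2 * m (E B 2) (E B 2) 2 := by linear_combination (-1) * Eqs_2_2_4 + (1) * Eqt_2_2_4
  have L_2_2_5 : m (E B 2) (E B 2) 5 = -2 * m (E B 2) (E B 2) 3 := by linear_combination (-1) * Eqs_2_2_5 + (1) * Eqt_2_2_5
  have L_2_3_0 : m (E B 2) (E B 3) 0 = 2 * m (E B 2) (E B 5) 0 := by linear_combination (1) * Eqs_2_3_0 + (-1) * Eqs_2_5_0 + (-1) * Eqt_2_5_0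
  have L_2_3_10 : (2:B) * (m (E B 2) (E B 3) 1 - (0)) = 0 := by linear_combination (1) * Eqs_2_3_1 + (-1) * Eqt_2_3_1
  have L_2_3_11 : m (E B 2) (E B 3) 1 - (0) = 0 := can2 _ (by linear_combination L_2_3_10)
  have L_2_3_1 : m (E B 2) (E B 3) 1 = 0 := by linear_combination L_2_3_11
  have L_2_3_4 : m (E B 2) (E B 3) 4 = -2 * m (E B 2) (E B 3) 2 := by linear_combination (-1) * Eqs_2_3_4 + (1) * Eqt_2_3_4
  have L_2_3_5 : m (E B 2) (E B 3) 5 = -2 * m (E B 2) (E B 3) 3 := by linear_combination (-1) * Eqs_2_3_5 + (1) * Eqt_2_3_5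
  have L_2_4_10 : (4:B) * (m (E B 2) (E B 4) 1 - (0)) = 0 := by linear_combination (-1) * Eqs_2_2_1 + (2) * Eqs_2_4_1 + (-1) * Eqt_2_2_1
  have L_2_4_11 : (2:B) * (m (E B 2) (E B 4) 1 - (0)) = 0 := can2 _ (by linear_combination L_2_4_10)
  have L_2_4_12 : m (E B 2) (E B 4) 1 - (0) = 0 := can2 _ (by linear_combination L_2_4_11)
  have L_2_4_1 : m (E B 2) (E B 4) 1 = 0 := by linear_combination L_2_4_12
  have L_2_4_2 : m (E B 2) (E B 4) 2 = -m (E B 2) (E B 2) 2 := by linear_combination (-1) * Eqs_2_4_4 + (1) * Eqt_2_2_4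
  have L_2_4_3 : m (E B 2) (E B 4) 3 = -m (E B 2) (E B 2) 3 := by linear_combination (-1) * Eqs_2_4_5 + (1) * Eqt_2_2_5
  have L_2_4_4 : m (E B 2) (E B 4) 4 = -m (E B 2) (E B 2) 2 := by linear_combination (-1) * Eqs_2_2_2 + (-1) * Eqs_2_2_4 + (1) * Eqs_2_4_2 + (1) * Eqs_2_4_4
  have L_2_4_5 : m (E B 2) (E B 4) 5 = -m (E B 2) (E B 2) 3 := by linear_combination (-1) * Eqs_2_2_3 + (-1) * Eqs_2_2_5 + (1) * Eqs_2_4_3 + (1) * Eqs_2_4_5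
  have L_2_5_20 : (3:B) * (m (E B 2) (E B 5) 2 - (-m (E B 2) (E B 3) 2)) = 0 := by linear_combination (-1) * Eqs_2_5_2 + (-2) * Eqs_2_5_4 + (1) * Eqs_3_4_2 + (-1) * Eqs_3_4_4 + (3) * Eqt_2_3_4
  have L_2_5_21 : m (E B 2) (E B 5) 2 - (-m (E B 2) (E B 3) 2) = 0 := can3 _ (by linear_combination L_2_5_20)
  have L_2_5_2 : m (E B 2) (E B 5) 2 = -m (E B 2) (E B 3) 2 := by linear_combination L_2_5_21
  have L_2_5_30 : (3:B) * (m (E B 2) (E B 5) 3 - (-m (E B 2) (E B 3) 3)) = 0 := by linear_combination (-1) * Eqs_2_5_3 + (-2) * Eqs_2_5_5 + (1) * Eqs_3_4_3 + (-1) * Eqs_3_4_5 + (3) * Eqt_2_3_5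
  have L_2_5_31 : m (E B 2) (E B 5) 3 - (-m (E B 2) (E B 3) 3) = 0 := can3 _ (by linear_combination L_2_5_30)
  have L_2_5_3 : m (E B 2) (E B 5) 3 = -m (E B 2) (E B 3) 3 := by linear_combination L_2_5_31
  have L_2_5_40 : (3:B) * (m (E B 2) (E B 5) 4 - (-m (E B 2) (E B 3) 2)) = 0 := by linear_combination (-3) * Eqs_2_3_2 + (-3) * Eqs_2_3_4 + (2) * Eqs_2_5_2 + (1) * Eqs_2_5_4 + (1) * Eqs_3_4_2 + (2) * Eqs_3_4_4
  have L_2_5_41 : m (E B 2) (E B 5) 4 - (-m (E B 2) (E B 3) 2) = 0 := can3 _ (by linear_combination L_2_5_40)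
  have L_2_5_4 : m (E B 2) (E B 5) 4 = -m (E B 2) (E B 3) 2 := by linear_combination L_2_5_41
  have L_2_5_50 : (3:B) * (m (E B 2) (E B 5) 5 - (-m (E B 2) (E B 3) 3)) = 0 := by linear_combination (-3) * Eqs_2_3_3 + (-3) * Eqs_2_3_5 + (2) * Eqs_2_5_3 + (1) * Eqs_2_5_5 + (1) * Eqs_3_4_3 + (2) * Eqs_3_4_5
  have L_2_5_51 : m (E B 2) (E B 5) 5 - (-m (E B 2) (E B 3) 3) = 0 := can3 _ (by linear_combination L_2_5_50)
  have L_2_5_5 : m (E B 2) (E B 5) 5 = -m (E B 2) (E B 3) 3 := by linear_combination L_2_5_51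
  have L_3_3_0 : m (E B 3) (E B 3) 0 = 2 * m (E B 3) (E B 5) 0 := by linear_combination (1) * Eqs_3_3_0 + (-1) * Eqs_3_5_0
  have L_3_3_10 : (2:B) * (m (E B 3) (E B 3) 1 - (0)) = 0 := by linear_combination (1) * Eqs_3_3_1 + (-1) * Eqt_3_3_1
  have L_3_3_11 : m (E B 3) (E B 3) 1 - (0) = 0 := can2 _ (by linear_combination L_3_3_10)
  have L_3_3_1 : m (E B 3) (E B 3) 1 = 0 := by linear_combination L_3_3_11
  have L_3_3_4 : m (E B 3) (E B 3) 4 = -2 * m (E B 3) (E B 3) 2 := by linear_combination (-1) * Eqs_3_3_4 + (1) * Eqt_3_3_4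
  have L_3_3_5 : m (E B 3) (E B 3) 5 = -2 * m (E B 3) (E B 3) 3 := by linear_combination (-1) * Eqs_3_3_5 + (1) * Eqt_3_3_5
  have L_3_4_0 : m (E B 3) (E B 4) 0 = m (E B 2) (E B 5) 0 := by linear_combination (-1) * Eqt_2_5_0
  have L_3_4_10 : (2:B) * (m (E B 3) (E B 4) 1 - (-m (E B 2) (E B 5) 1)) = 0 := by linear_combination (-1) * Eqs_2_3_1 + (2) * Eqs_2_5_1 + (-1) * Eqt_2_3_1
  have L_3_4_11 : m (E B 3) (E B 4) 1 - (-m (E B 2) (E B 5) 1) = 0 := can2 _ (by linear_combination L_3_4_10)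
  have L_3_4_1 : m (E B 3) (E B 4) 1 = -m (E B 2) (E B 5) 1 := by linear_combination L_3_4_11
  have L_3_4_20 : (3:B) * (m (E B 3) (E B 4) 2 - (-m (E B 2) (E B 3) 2)) = 0 := by linear_combination (1) * Eqs_2_5_2 + (-1) * Eqs_2_5_4 + (-1) * Eqs_3_4_2 + (-2) * Eqs_3_4_4 + (3) * Eqt_2_3_4
  have L_3_4_21 : m (E B 3) (E B 4) 2 - (-m (E B 2) (E B 3) 2) = 0 := can3 _ (by linear_combination L_3_4_20)
  have L_3_4_2 : m (E B 3) (E B 4) 2 = -m (E B 2) (E B 3) 2 := by linear_combination L_3_4_21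
  have L_3_4_30 : (3:B) * (m (E B 3) (E B 4) 3 - (-m (E B 2) (E B 3) 3)) = 0 := by linear_combination (1) * Eqs_2_5_3 + (-1) * Eqs_2_5_5 + (-1) * Eqs_3_4_3 + (-2) * Eqs_3_4_5 + (3) * Eqt_2_3_5
  have L_3_4_31 : m (E B 3) (E B 4) 3 - (-m (E B 2) (E B 3) 3) = 0 := can3 _ (by linear_combination L_3_4_30)
  have L_3_4_3 : m (E B 3) (E B 4) 3 = -m (E B 2) (E B 3) 3 := by linear_combination L_3_4_31
  have L_3_4_40 : (3:B) * (m (E B 3) (E B 4) 4 - (-m (E B 2) (E B 3) 2)) = 0 := by linear_combination (-3) * Eqs_2_3_2 + (-3) * Eqs_2_3_4 + (1) * Eqs_2_5_2 + (2) * Eqs_2_5_4 + (2) * Eqs_3_4_2 + (1) * Eqs_3_4_4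
  have L_3_4_41 : m (E B 3) (E B 4) 4 - (-m (E B 2) (E B 3) 2) = 0 := can3 _ (by linear_combination L_3_4_40)
  have L_3_4_4 : m (E B 3) (E B 4) 4 = -m (E B 2) (E B 3) 2 := by linear_combination L_3_4_41
  have L_3_4_50 : (3:B) * (m (E B 3) (E B 4) 5 - (-m (E B 2) (E B 3) 3)) = 0 := by linear_combination (-3) * Eqs_2_3_3 + (-3) * Eqs_2_3_5 + (1) * Eqs_2_5_3 + (2) * Eqs_2_5_5 + (2) * Eqs_3_4_3 + (1) * Eqs_3_4_5
  have L_3_4_51 : m (E B 3) (E B 4) 5 - (-m (E B 2) (E B 3) 3) = 0 := can3 _ (by linear_combination L_3_4_50)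
  have L_3_4_5 : m (E B 3) (E B 4) 5 = -m (E B 2) (E B 3) 3 := by linear_combination L_3_4_51
  have L_3_5_10 : (4:B) * (m (E B 3) (E B 5) 1 - (0)) = 0 := by linear_combination (-1) * Eqs_3_3_1 + (2) * Eqs_3_5_1 + (-1) * Eqt_3_3_1
  have L_3_5_11 : (2:B) * (m (E B 3) (E B 5) 1 - (0)) = 0 := can2 _ (by linear_combination L_3_5_10)
  have L_3_5_12 : m (E B 3) (E B 5) 1 - (0) = 0 := can2 _ (by linear_combination L_3_5_11)
  have L_3_5_1 : m (E B 3) (E B 5) 1 = 0 := by linear_combination L_3_5_12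
  have L_3_5_2 : m (E B 3) (E B 5) 2 = -m (E B 3) (E B 3) 2 := by linear_combination (-1) * Eqs_3_5_4 + (1) * Eqt_3_3_4
  have L_3_5_3 : m (E B 3) (E B 5) 3 = -m (E B 3) (E B 3) 3 := by linear_combination (-1) * Eqs_3_5_5 + (1) * Eqt_3_3_5
  have L_3_5_4 : m (E B 3) (E B 5) 4 = -m (E B 3) (E B 3) 2 := by linear_combination (-1) * Eqs_3_3_2 + (-1) * Eqs_3_3_4 + (1) * Eqs_3_5_2 + (1) * Eqs_3_5_4
  have L_3_5_5 : m (E B 3) (E B 5) 5 = -m (E B 3) (E B 3) 3 := by linear_combination (-1) * Eqs_3_3_3 + (-1) * Eqs_3_3_5 + (1) * Eqs_3_5_3 + (1) * Eqs_3_5_5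
  have L_4_4_0 : m (E B 4) (E B 4) 0 = 2 * m (E B 2) (E B 4) 0 := by linear_combination (-1) * Eqs_2_4_0
  have L_4_4_10 : (2:B) * (m (E B 4) (E B 4) 1 - (0)) = 0 := by linear_combination (-1) * Eqs_2_2_1 + (-1) * Eqt_2_2_1
  have L_4_4_11 : m (E B 4) (E B 4) 1 - (0) = 0 := can2 _ (by linear_combination L_4_4_10)
  have L_4_4_1 : m (E B 4) (E B 4) 1 = 0 := by linear_combination L_4_4_11
  have L_4_4_2 : m (E B 4) (E B 4) 2 = -2 * m (E B 2) (E B 2) 2 := by linear_combination (-1) * Eqs_2_2_2 + (-1) * Eqs_2_2_4 + (1) * Eqt_2_2_4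
  have L_4_4_3 : m (E B 4) (E B 4) 3 = -2 * m (E B 2) (E B 2) 3 := by linear_combination (-1) * Eqs_2_2_3 + (-1) * Eqs_2_2_5 + (1) * Eqt_2_2_5
  have L_4_4_4 : m (E B 4) (E B 4) 4 = m (E B 2) (E B 2) 2 := by linear_combination (-1) * Eqt_2_2_4
  have L_4_4_5 : m (E B 4) (E B 4) 5 = m (E B 2) (E B 2) 3 := by linear_combination (-1) * Eqt_2_2_5
  have L_4_5_0 : m (E B 4) (E B 5) 0 = 2 * m (E B 2) (E B 5) 0 := by linear_combination (-1) * Eqs_2_5_0 + (-1) * Eqt_2_5_0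
  have L_4_5_10 : (2:B) * (m (E B 4) (E B 5) 1 - (0)) = 0 := by linear_combination (-1) * Eqs_2_3_1 + (-1) * Eqt_2_3_1
  have L_4_5_11 : m (E B 4) (E B 5) 1 - (0) = 0 := can2 _ (by linear_combination L_4_5_10)
  have L_4_5_1 : m (E B 4) (E B 5) 1 = 0 := by linear_combination L_4_5_11
  have L_4_5_2 : m (E B 4) (E B 5) 2 = -2 * m (E B 2) (E B 3) 2 := by linear_combination (-1) * Eqs_2_3_2 + (-1) * Eqs_2_3_4 + (1) * Eqt_2_3_4
  have L_4_5_3 : m (E B 4) (E B 5) 3 = -2 * m (E B 2) (E B 3) 3 := by linear_combination (-1) * Eqs_2_3_3 + (-1) * Eqs_2_3_5 + (1) * Eqt_2_3_5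
  have L_4_5_4 : m (E B 4) (E B 5) 4 = m (E B 2) (E B 3) 2 := by linear_combination (-1) * Eqt_2_3_4
  have L_4_5_5 : m (E B 4) (E B 5) 5 = m (E B 2) (E B 3) 3 := by linear_combination (-1) * Eqt_2_3_5
  have L_5_5_0 : m (E B 5) (E B 5) 0 = 2 * m (E B 3) (E B 5) 0 := by linear_combination (-1) * Eqs_3_5_0
  have L_5_5_10 : (2:B) * (m (E B 5) (E B 5) 1 - (0)) = 0 := by linear_combination (-1) * Eqs_3_3_1 + (-1) * Eqt_3_3_1
  have L_5_5_11 : m (E B 5) (E B 5) 1 - (0) = 0 := can2 _ (by linear_combination L_5_5_10)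
  have L_5_5_1 : m (E B 5) (E B 5) 1 = 0 := by linear_combination L_5_5_11
  have L_5_5_2 : m (E B 5) (E B 5) 2 = -2 * m (E B 3) (E B 3) 2 := by linear_combination (-1) * Eqs_3_3_2 + (-1) * Eqs_3_3_4 + (1) * Eqt_3_3_4
  have L_5_5_3 : m (E B 5) (E B 5) 3 = -2 * m (E B 3) (E B 3) 3 := by linear_combination (-1) * Eqs_3_3_3 + (-1) * Eqs_3_3_5 + (1) * Eqt_3_3_5
  have L_5_5_4 : m (E B 5) (E B 5) 4 = m (E B 3) (E B 3) 2 := by linear_combination (-1) * Eqt_3_3_4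
  have L_5_5_5 : m (E B 5) (E B 5) 5 = m (E B 3) (E B 3) 3 := by linear_combination (-1) * Eqt_3_3_5
  
  have ha_1_1_2 := hassoc (E B 1) (E B 1) (E B 2)
  rw [hx1 (m (E B 1) (E B 1)) 2, hx2 1 (m (E B 1) (E B 2))] at ha_1_1_2
  rw [hcomm (E B 3) (E B 2)] at ha_1_1_2
  rw [hcomm (E B 4) (E B 2)] at ha_1_1_2
  rw [hcomm (E B 5) (E B 2)] at ha_1_1_2
  have A_1_1_2_2 : m (E B 1) (E B 1) 0 + m (E B 1) (E B 1) 1 * m (E B 1) (E B 2) 2 + m (E B 1) (E B 1) 2 * m (E B 2) (E B 2) 2 + m (E B 1) (E B 1) 3 * m (E B 2) (E B 3) 2 + m (E B 1) (E B 1) 4 * m (E B 2) (E B 4) 2 + m (E B 1) (E B 1) 5 * m (E B 2) (E B 5) 2 = m (E B 1) (E B 2) 1 * m (E B 1) (E B 1) 2 + m (E B 1) (E B 2) 2 * m (E B 1) (E B 2) 2 + m (E B 1) (E B 2) 3 * m (E B 1) (E B 3) 2 + m (E B 1) (E B 2) 4 * m (E B 1) (E B 4) 2 + m (E B 1) (E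 B 2) 5 * m (E B 1) (E B 5) 2 := by
    have hh := congrFun ha_1_1_2 2
    simp [Eval] at hh
    first
      | linear_combination hh
      | linear_combination -hh
  rw [L_1_1_1, L_1_1_2, L_1_1_3, L_1_1_4, L_1_1_5, L_1_2_1, L_1_2_4, L_1_2_5, L_1_4_2, L_1_5_2, L_2_4_2, L_2_5_2] at A_1_1_2_2
  have A_1_1_2_3 : m (E B 1) (E B 1) 1 * m (E B 1) (E B 2) 3 + m (E B 1) (E B 1) 2 * m (E B 2) (E B 2) 3 + m (E B 1) (E B 1) 3 * m (E B 2) (E B 3) 3 + m (E B 1) (E B 1) 4 * m (E B 2) (E B 4) 3 + m (E B 1) (E B 1) 5 * m (E B 2) (E B 5) 3 = m (E B 1) (E B 2) 1 * m (E B 1) (E B 1) 3 + m (E B 1) (E B 2) 2 * m (E B 1) (E B 2) 3 + m (E B 1) (E B 2) 3 * m (E B 1) (E B 3) 3 + m (E B 1) (E B 2) 4 * m (E B 1) (E B 4) 3 + m (E B 1) (E B 2) 5 * m (E B 1) (E B 5) 3 := by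
    have hh := congrFun ha_1_1_2 3
    simp [Eval] at hh
    first
      | linear_combination hh
      | linear_combination -hh
  rw [L_1_1_1, L_1_1_2, L_1_1_3, L_1_1_4, L_1_1_5, L_1_2_1, L_1_2_4, L_1_2_5, L_1_4_3, L_1_5_3, L_2_4_3, L_2_5_3] at A_1_1_2_3
  have ha_1_1_3 := hassoc (E B 1) (E B 1) (E B 3)
  rw [hx1 (m (E B 1) (E B 1)) 3, hx2 1 (m (E B 1) (E B 3))] at ha_1_1_3
  rw [hcomm (E B 4) (E B 3)] at ha_1_1_3
  rw [hcomm (E B 5) (E B 3)] at ha_1_1_3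
  have A_1_1_3_2 : m (E B 1) (E B 1) 1 * m (E B 1) (E B 3) 2 + m (E B 1) (E B 1) 2 * m (E B 2) (E B 3) 2 + m (E B 1) (E B 1) 3 * m (E B 3) (E B 3) 2 + m (E B 1) (E B 1) 4 * m (E B 3) (E B 4) 2 + m (E B 1) (E B 1) 5 * m (E B 3) (E B 5) 2 = m (E B 1) (E B 3) 1 * m (E B 1) (E B 1) 2 + m (E B 1) (E B 3) 2 * m (E B 1) (E B 2) 2 + m (E B 1) (E B 3) 3 * m (E B 1) (E B 3) 2 + m (E B 1) (E B 3) 4 * m (E B 1) (E B 4) 2 + m (E B 1) (E B 3) 5 * m (E B 1) (E B 5) 2 := by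
    have hh := congrFun ha_1_1_3 2
    simp [Eval] at hh
    first
      | linear_combination hh
      | linear_combination -hh
  rw [L_1_1_1, L_1_1_2, L_1_1_3, L_1_1_4, L_1_1_5, L_1_3_1, L_1_3_4, L_1_3_5, L_1_4_2, L_1_5_2, L_3_4_2, L_3_5_2] at A_1_1_3_2
  have A_1_1_3_3 : m (E B 1) (E B 1) 0 + m (E B 1) (E B 1) 1 * m (E B 1) (E B 3) 3 + m (E B 1) (E B 1) 2 * m (E B 2) (E B 3) 3 + m (E B 1) (E B 1) 3 * m (E B 3) (E B 3) 3 + m (E B 1) (E B 1) 4 * m (E B 3) (E B 4) 3 + m (E B 1) (E B 1) 5 * m (E B 3) (E B 5) 3 = m (E B 1) (E B 3) 1 * m (E B 1) (E B 1) 3 + m (E B 1) (E B 3) 2 * m (E B 1) (E B 2) 3 + m (E B 1) (E B 3) 3 * m (E B 1) (E B 3) 3 + m (E B 1) (E B 3) 4 * m (E B 1) (E B 4) 3 + m (E B 1) (E B 3) 5 * m (E B 1) (E B 5) 3 := by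
    have hh := congrFun ha_1_1_3 3
    simp [Eval] at hh
    first
      | linear_combination hh
      | linear_combination -hh
  rw [L_1_1_1, L_1_1_2, L_1_1_3, L_1_1_4, L_1_1_5, L_1_3_1, L_1_3_4, L_1_3_5, L_1_4_3, L_1_5_3, L_3_4_3, L_3_5_3] at A_1_1_3_3
  have ha_1_2_2 := hassoc (E B 1) (E B 2) (E B 2)
  rw [hx1 (m (E B 1) (E B 2)) 2, hx2 1 (m (E B 2) (E B 2))] at ha_1_2_2
  rw [hcomm (E B 3) (E B 2)] at ha_1_2_2
  rw [hcomm (E B 4) (E B 2)] at ha_1_2_2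
  rw [hcomm (E B 5) (E B 2)] at ha_1_2_2
  have A_1_2_2_1 : m (E B 1) (E B 2) 1 * m (E B 1) (E B 2) 1 + m (E B 1) (E B 2) 2 * m (E B 2) (E B 2) 1 + m (E B 1) (E B 2) 3 * m (E B 2) (E B 3) 1 + m (E B 1) (E B 2) 4 * m (E B 2) (E B 4) 1 + m (E B 1) (E B 2) 5 * m (E B 2) (E B 5) 1 = m (E B 2) (E B 2) 0 + m (E B 2) (E B 2) 1 * m (E B 1) (E B 1) 1 + m (E B 2) (E B 2) 2 * m (E B 1) (E B 2) 1 + m (E B 2) (E B 2) 3 * m (E B 1) (E B 3) 1 + m (E B 2) (E B 2) 4 * m (E B 1) (E B 4) 1 + m (E B 2) (E B 2) 5 * m (E B 1) (E B 5) 1 := by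
    have hh := congrFun ha_1_2_2 1
    simp [Eval] at hh
    first
      | linear_combination hh
      | linear_combination -hh
  rw [L_1_1_1, L_1_2_1, L_1_2_4, L_1_2_5, L_1_3_1, L_1_4_1, L_1_5_1, L_2_2_0, L_2_2_1, L_2_2_4, L_2_2_5, L_2_3_1, L_2_4_1] at A_1_2_2_1
  have A_1_2_2_2 : m (E B 1) (E B 2) 0 + m (E B 1) (E B 2) 1 * m (E B 1) (E B 2) 2 + m (E B 1) (E B 2) 2 * m (E B 2) (E B 2) 2 + m (E B 1) (E B 2) 3 * m (E B 2) (E B 3) 2 + m (E B 1) (E B 2) 4 * m (E B 2) (E B 4) 2 + m (E B 1) (E B 2) 5 * m (E B 2) (E B 5) 2 = m (E B 2) (E B 2) 1 * m (E B 1) (E B 1) 2 + m (E B 2) (E B 2) 2 * m (E B 1) (E B 2) 2 + m (E B 2) (E B 2) 3 * m (E B 1) (E B 3) 2 + m (E B 2) (E B 2) 4 * m (E B 1) (E B 4) 2 + m (E B 2) (E B 2) 5 * m (E B 1) (E B 5) 2 := by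
    have hh := congrFun ha_1_2_2 2
    simp [Eval] at hh
    first
      | linear_combination hh
      | linear_combination -hh
  rw [L_1_1_2, L_1_2_0, L_1_2_1, L_1_2_4, L_1_2_5, L_1_4_2, L_1_5_2, L_2_2_1, L_2_2_4, L_2_2_5, L_2_4_2, L_2_5_2] at A_1_2_2_2
  have A_1_2_2_3 : m (E B 1) (E B 2) 1 * m (E B 1) (E B 2) 3 + m (E B 1) (E B 2) 2 * m (E B 2) (E B 2) 3 + m (E B 1) (E B 2) 3 * m (E B 2) (E B 3) 3 + m (E B 1) (E B 2) 4 * m (E B 2) (E B 4) 3 + m (E B 1) (E B 2) 5 * m (E B 2) (E B 5) 3 = m (E B 2) (E B 2) 1 * m (E B 1) (E B 1) 3 + m (E B 2) (E B 2) 2 * m (E B 1) (E B 2) 3 + m (E B 2) (E B 2) 3 * m (E B 1) (E B 3) 3 + m (E B 2) (E B 2) 4 * m (E B 1) (E B 4) 3 + m (E B 2) (E B 2) 5 * m (E B 1) (E B 5) 3 := by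
    have hh := congrFun ha_1_2_2 3
    simp [Eval] at hh
    first
      | linear_combination hh
      | linear_combination -hh
  rw [L_1_1_3, L_1_2_1, L_1_2_4, L_1_2_5, L_1_4_3, L_1_5_3, L_2_2_1, L_2_2_4, L_2_2_5, L_2_4_3, L_2_5_3] at A_1_2_2_3
  have ha_1_2_3 := hassoc (E B 1) (E B 2) (E B 3)
  rw [hx1 (m (E B 1) (E B 2)) 3, hx2 1 (m (E B 2) (E B 3))] at ha_1_2_3
  rw [hcomm (E B 4) (E B 3)] at ha_1_2_3
  rw [hcomm (E B 5) (E B 3)] at ha_1_2_3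
  have A_1_2_3_1 : m (E B 1) (E B 2) 1 * m (E B 1) (E B 3) 1 + m (E B 1) (E B 2) 2 * m (E B 2) (E B 3) 1 + m (E B 1) (E B 2) 3 * m (E B 3) (E B 3) 1 + m (E B 1) (E B 2) 4 * m (E B 3) (E B 4) 1 + m (E B 1) (E B 2) 5 * m (E B 3) (E B 5) 1 = m (E B 2) (E B 3) 0 + m (E B 2) (E B 3) 1 * m (E B 1) (E B 1) 1 + m (E B 2) (E B 3) 2 * m (E B 1) (E B 2) 1 + m (E B 2) (E B 3) 3 * m (E B 1) (E B 3) 1 + m (E B 2) (E B 3) 4 * m (E B 1) (E B 4) 1 + m (E B 2) (E B 3) 5 * m (E B 1) (E B 5) 1 := by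
    have hh := congrFun ha_1_2_3 1
    simp [Eval] at hh
    first
      | linear_combination hh
      | linear_combination -hh
  rw [L_1_1_1, L_1_2_1, L_1_2_4, L_1_2_5, L_1_3_1, L_1_4_1, L_1_5_1, L_2_3_0, L_2_3_1, L_2_3_4, L_2_3_5, L_3_3_1, L_3_4_1, L_3_5_1] at A_1_2_3_1
  have A_1_2_3_2 : m (E B 1) (E B 2) 1 * m (E B 1) (E B 3) 2 + m (E B 1) (E B 2) 2 * m (E B 2) (E B 3) 2 + m (E B 1) (E B 2) 3 * m (E B 3) (E B 3) 2 + m (E B 1) (E B 2) 4 * m (E B 3) (E B 4) 2 + m (E B 1) (E B 2) 5 * m (E B 3) (E B 5) 2 = m (E B 2) (E B 3) 1 * m (E B 1) (E B 1) 2 + m (E B 2) (E B 3) 2 * m (E B 1) (E B 2) 2 + m (E B 2) (E B 3) 3 * m (E B 1) (E B 3) 2 + m (E B 2) (E B 3) 4 * m (E B 1) (E B 4) 2 + m (E B 2) (E B 3) 5 * m (E B 1) (E B 5) 2 := by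
    have hh := congrFun ha_1_2_3 2
    simp [Eval] at hh
    first
      | linear_combination hh
      | linear_combination -hh
  rw [L_1_1_2, L_1_2_1, L_1_2_4, L_1_2_5, L_1_4_2, L_1_5_2, L_2_3_1, L_2_3_4, L_2_3_5, L_3_4_2, L_3_5_2] at A_1_2_3_2
  have ha_1_3_3 := hassoc (E B 1) (E B 3) (E B 3)
  rw [hx1 (m (E B 1) (E B 3)) 3, hx2 1 (m (E B 3) (E B 3))] at ha_1_3_3
  rw [hcomm (E B 4) (E B 3)] at ha_1_3_3
  rw [hcomm (E B 5) (E B 3)] at ha_1_3_3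
  have A_1_3_3_1 : m (E B 1) (E B 3) 1 * m (E B 1) (E B 3) 1 + m (E B 1) (E B 3) 2 * m (E B 2) (E B 3) 1 + m (E B 1) (E B 3) 3 * m (E B 3) (E B 3) 1 + m (E B 1) (E B 3) 4 * m (E B 3) (E B 4) 1 + m (E B 1) (E B 3) 5 * m (E B 3) (E B 5) 1 = m (E B 3) (E B 3) 0 + m (E B 3) (E B 3) 1 * m (E B 1) (E B 1) 1 + m (E B 3) (E B 3) 2 * m (E B 1) (E B 2) 1 + m (E B 3) (E B 3) 3 * m (E B 1) (E B 3) 1 + m (E B 3) (E B 3) 4 * m (E B 1) (E B 4) 1 + m (E B 3) (E B 3) 5 * m (E B 1) (E B 5) 1 := by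
    have hh := congrFun ha_1_3_3 1
    simp [Eval] at hh
    first
      | linear_combination hh
      | linear_combination -hh
  rw [L_1_1_1, L_1_2_1, L_1_3_1, L_1_3_4, L_1_3_5, L_1_4_1, L_1_5_1, L_2_3_1, L_3_3_0, L_3_3_1, L_3_3_4, L_3_3_5, L_3_4_1, L_3_5_1] at A_1_3_3_1
  have ha_1_3_4 := hassoc (E B 1) (E B 3) (E B 4)
  rw [hx1 (m (E B 1) (E B 3)) 4, hx2 1 (m (E B 3) (E B 4))] at ha_1_3_4
  rw [hcomm (E B 5) (E B 4)] at ha_1_3_4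
  have A_1_3_4_1 : m (E B 1) (E B 3) 1 * m (E B 1) (E B 4) 1 + m (E B 1) (E B 3) 2 * m (E B 2) (E B 4) 1 + m (E B 1) (E B 3) 3 * m (E B 3) (E B 4) 1 + m (E B 1) (E B 3) 4 * m (E B 4) (E B 4) 1 + m (E B 1) (E B 3) 5 * m (E B 4) (E B 5) 1 = m (E B 3) (E B 4) 0 + m (E B 3) (E B 4) 1 * m (E B 1) (E B 1) 1 + m (E B 3) (E B 4) 2 * m (E B 1) (E B 2) 1 + m (E B 3) (E B 4) 3 * m (E B 1) (E B 3) 1 + m (E B 3) (E B 4) 4 * m (E B 1) (E B 4) 1 + m (E B 3) (E B 4) 5 * m (E B 1) (E B 5) 1 := by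
    have hh := congrFun ha_1_3_4 1
    simp [Eval] at hh
    first
      | linear_combination hh
      | linear_combination -hh
  rw [L_1_1_1, L_1_2_1, L_1_3_1, L_1_3_4, L_1_3_5, L_1_4_1, L_1_5_1, L_2_4_1, L_3_4_0, L_3_4_1, L_3_4_2, L_3_4_3, L_3_4_4, L_3_4_5, L_4_4_1, L_4_5_1] at A_1_3_4_1
  have ha_2_2_3 := hassoc (E B 2) (E B 2) (E B 3)
  rw [hx1 (m (E B 2) (E B 2)) 3, hx2 2 (m (E B 2) (E B 3))] at ha_2_2_3
  rw [hcomm (E B 2) (E B 1)] at ha_2_2_3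
  rw [hcomm (E B 4) (E B 3)] at ha_2_2_3
  rw [hcomm (E B 5) (E B 3)] at ha_2_2_3
  have A_2_2_3_1 : m (E B 2) (E B 2) 1 * m (E B 1) (E B 3) 1 + m (E B 2) (E B 2) 2 * m (E B 2) (E B 3) 1 + m (E B 2) (E B 2) 3 * m (E B 3) (E B 3) 1 + m (E B 2) (E B 2) 4 * m (E B 3) (E B 4) 1 + m (E B 2) (E B 2) 5 * m (E B 3) (E B 5) 1 = m (E B 2) (E B 3) 1 * m (E B 1) (E B 2) 1 + m (E B 2) (E B 3) 2 * m (E B 2) (E B 2) 1 + m (E B 2) (E B 3) 3 * m (E B 2) (E B 3) 1 + m (E B 2) (E B 3) 4 * m (E B 2) (E B 4) 1 + m (E B 2) (E B 3) 5 * m (E B 2) (E B 5) 1 := by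
    have hh := congrFun ha_2_2_3 1
    simp [Eval] at hh
    first
      | linear_combination hh
      | linear_combination -hh
  rw [L_1_2_1, L_1_3_1, L_2_2_1, L_2_2_4, L_2_2_5, L_2_3_1, L_2_3_4, L_2_3_5, L_2_4_1, L_3_3_1, L_3_4_1, L_3_5_1] at A_2_2_3_1
  have ha_2_2_4 := hassoc (E B 2) (E B 2) (E B 4)
  rw [hx1 (m (E B 2) (E B 2)) 4, hx2 2 (m (E B 2) (E B 4))] at ha_2_2_4
  rw [hcomm (E B 2) (E B 1)] at ha_2_2_4
  rw [hcomm (E B 5) (E B 4)] at ha_2_2_4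
  have A_2_2_4_2 : m (E B 2) (E B 2) 1 * m (E B 1) (E B 4) 2 + m (E B 2) (E B 2) 2 * m (E B 2) (E B 4) 2 + m (E B 2) (E B 2) 3 * m (E B 3) (E B 4) 2 + m (E B 2) (E B 2) 4 * m (E B 4) (E B 4) 2 + m (E B 2) (E B 2) 5 * m (E B 4) (E B 5) 2 = m (E B 2) (E B 4) 0 + m (E B 2) (E B 4) 1 * m (E B 1) (E B 2) 2 + m (E B 2) (E B 4) 2 * m (E B 2) (E B 2) 2 + m (E B 2) (E B 4) 3 * m (E B 2) (E B 3) 2 + m (E B 2) (E B 4) 4 * m (E B 2) (E B 4) 2 + m (E B 2) (E B 4) 5 * m (E B 2) (E B 5) 2 := by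
    have hh := congrFun ha_2_2_4 2
    simp [Eval] at hh
    first
      | linear_combination hh
      | linear_combination -hh
  rw [L_1_4_2, L_2_2_1, L_2_2_4, L_2_2_5, L_2_4_1, L_2_4_2, L_2_4_3, L_2_4_4, L_2_4_5, L_2_5_2, L_3_4_2, L_4_4_2, L_4_5_2] at A_2_2_4_2
  have A_2_2_4_3 : m (E B 2) (E B 2) 1 * m (E B 1) (E B 4) 3 + m (E B 2) (E B 2) 2 * m (E B 2) (E B 4) 3 + m (E B 2) (E B 2) 3 * m (E B 3) (E B 4) 3 + m (E B 2) (E B 2) 4 * m (E B 4) (E B 4) 3 + m (E B 2) (E B 2) 5 * m (E B 4) (E B 5) 3 = m (E B 2) (E B 4) 1 * m (E B 1) (E B 2) 3 + m (E B 2) (E B 4) 2 * m (E B 2) (E B 2) 3 + m (E B 2) (E B 4) 3 * m (E B 2) (E B 3) 3 + m (E B 2) (E B 4) 4 * m (E B 2) (E B 4) 3 + m (E B 2) (E B 4) 5 * m (E B 2) (E B 5) 3 := by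
    have hh := congrFun ha_2_2_4 3
    simp [Eval] at hh
    first
      | linear_combination hh
      | linear_combination -hh
  rw [L_1_4_3, L_2_2_1, L_2_2_4, L_2_2_5, L_2_4_1, L_2_4_2, L_2_4_3, L_2_4_4, L_2_4_5, L_2_5_3, L_3_4_3, L_4_4_3, L_4_5_3] at A_2_2_4_3
  have ha_2_2_5 := hassoc (E B 2) (E B 2) (E B 5)
  rw [hx1 (m (E B 2) (E B 2)) 5, hx2 2 (m (E B 2) (E B 5))] at ha_2_2_5
  rw [hcomm (E B 2) (E B 1)] at ha_2_2_5
  have A_2_2_5_2 : m (E B 2) (E B 2) 1 * m (E B 1) (E B 5) 2 + m (E B 2) (E B 2) 2 * m (E B 2) (E B 5) 2 + m (E B 2) (E B 2) 3 * m (E B 3) (E B 5) 2 + m (E B 2) (E B 2) 4 * m (E B 4) (E B 5) 2 + m (E B 2) (E B 2) 5 * m (E B 5) (E B 5) 2 = m (E B 2) (E B 5) 0 + m (E B 2) (E B 5) 1 * m (E B 1) (E B 2) 2 + m (E B 2) (E B 5) 2 * m (E B 2) (E B 2) 2 + m (E B 2) (E B 5) 3 * m (E B 2) (E B 3) 2 +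 m (E B 2) (E B 5) 4 * m (E B 2) (E B 4) 2 + m (E B 2) (E B 5) 5 * m (E B 2) (E B 5) 2 := by
    have hh := congrFun ha_2_2_5 2
    simp [Eval] at hh
    first
      | linear_combination hh
      | linear_combination -hh
  rw [L_1_5_2, L_2_2_1, L_2_2_4, L_2_2_5, L_2_4_2, L_2_5_2, L_2_5_3, L_2_5_4, L_2_5_5, L_3_5_2, L_4_5_2, L_5_5_2] at A_2_2_5_2
  have ha_2_3_3 := hassoc (E B 2) (E B 3) (E B 3)
  rw [hx1 (m (E B 2) (E B 3)) 3, hx2 2 (m (E B 3) (E B 3))] at ha_2_3_3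
  rw [hcomm (E B 2) (E B 1)] at ha_2_3_3
  rw [hcomm (E B 4) (E B 3)] at ha_2_3_3
  rw [hcomm (E B 5) (E B 3)] at ha_2_3_3
  have A_2_3_3_1 : m (E B 2) (E B 3) 1 * m (E B 1) (E B 3) 1 + m (E B 2) (E B 3) 2 * m (E B 2) (E B 3) 1 + m (E B 2) (E B 3) 3 * m (E B 3) (E B 3) 1 + m (E B 2) (E B 3) 4 * m (E B 3) (E B 4) 1 + m (E B 2) (E B 3) 5 * m (E B 3) (E B 5) 1 = m (E B 3) (E B 3) 1 * m (E B 1) (E B 2) 1 + m (E B 3) (E B 3) 2 * m (E B 2) (E B 2) 1 + m (E B 3) (E B 3) 3 * m (E B 2) (E B 3) 1 + m (E B 3) (E B 3) 4 * m (E B 2) (E B 4) 1 + m (E B 3) (E B 3) 5 * m (E B 2) (E B 5) 1 := by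
    have hh := congrFun ha_2_3_3 1
    simp [Eval] at hh
    first
      | linear_combination hh
      | linear_combination -hh
  rw [L_1_2_1, L_1_3_1, L_2_2_1, L_2_3_1, L_2_3_4, L_2_3_5, L_2_4_1, L_3_3_1, L_3_3_4, L_3_3_5, L_3_4_1, L_3_5_1] at A_2_3_3_1
  have ha_2_3_5 := hassoc (E B 2) (E B 3) (E B 5)
  rw [hx1 (m (E B 2) (E B 3)) 5, hx2 2 (m (E B 3) (E B 5))] at ha_2_3_5
  rw [hcomm (E B 2) (E B 1)] at ha_2_3_5
  have A_2_3_5_2 : m (E B 2) (E B 3) 1 * m (E B 1) (E B 5) 2 + m (E B 2) (E B 3) 2 * m (E B 2) (E B 5) 2 + m (E B 2) (E B 3) 3 * m (E B 3) (E B 5) 2 + m (E B 2) (E B 3) 4 * m (E B 4) (E B 5) 2 + m (E B 2) (E B 3) 5 * m (E B 5) (E B 5) 2 = m (E B 3) (E B 5) 0 + m (E B 3) (E B 5) 1 * m (E B 1) (E B 2) 2 + m (E B 3) (E B 5) 2 * m (E B 2) (E B 2) 2 + m (E B 3) (E B 5) 3 * m (E B 2) (E B 3) 2 + m (E B 3)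 (E B 5) 4 * m (E B 2) (E B 4) 2 + m (E B 3) (E B 5) 5 * m (E B 2) (E B 5) 2 := by
    have hh := congrFun ha_2_3_5 2
    simp [Eval] at hh
    first
      | linear_combination hh
      | linear_combination -hh
  rw [L_1_5_2, L_2_3_1, L_2_3_4, L_2_3_5, L_2_4_2, L_2_5_2, L_3_5_1, L_3_5_2, L_3_5_3, L_3_5_4, L_3_5_5, L_4_5_2, L_5_5_2] at A_2_3_5_2
  have A_2_3_5_3 : m (E B 2) (E B 3) 1 * m (E B 1) (E B 5) 3 + m (E B 2) (E B 3) 2 * m (E B 2) (E B 5) 3 + m (E B 2) (E B 3) 3 * m (E B 3) (E B 5) 3 + m (E B 2) (E B 3) 4 * m (E B 4) (E B 5) 3 + m (E B 2) (E B 3) 5 * m (E B 5) (E B 5) 3 = m (E B 3) (E B 5) 1 * m (E B 1) (E B 2) 3 + m (E B 3) (E B 5) 2 * m (E B 2) (E B 2) 3 + m (E B 3) (E B 5) 3 * m (E B 2) (E B 3) 3 + m (E B 3) (E B 5) 4 * m (E B 2) (E B 4) 3 + m (E B 3) (E B 5) 5 * m (E B 2) (E B 5) 3 := by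
    have hh := congrFun ha_2_3_5 3
    simp [Eval] at hh
    first
      | linear_combination hh
      | linear_combination -hh
  rw [L_1_5_3, L_2_3_1, L_2_3_4, L_2_3_5, L_2_4_3, L_2_5_3, L_3_5_1, L_3_5_2, L_3_5_4, L_3_5_5, L_4_5_3, L_5_5_3] at A_2_3_5_3
  have ha_2_4_5 := hassoc (E B 2) (E B 4) (E B 5)
  rw [hx1 (m (E B 2) (E B 4)) 5, hx2 2 (m (E B 4) (E B 5))] at ha_2_4_5
  rw [hcomm (E B 2) (E B 1)] at ha_2_4_5
  have A_2_4_5_4 : m (E B 2) (E B 4) 1 * m (E B 1) (E B 5) 4 + m (E B 2) (E B 4) 2 * m (E B 2) (E B 5) 4 + m (E B 2) (E B 4) 3 * m (E B 3) (E B 5) 4 + m (E B 2) (E B 4) 4 * m (E B 4) (E B 5) 4 + m (E B 2) (E B 4) 5 * m (E B 5) (E B 5) 4 = m (E B 4) (E B 5) 1 * m (E B 1) (E B 2) 4 + m (E B 4) (E B 5) 2 * m (E B 2) (E B 2) 4 + m (E B 4) (E B 5) 3 * m (E B 2) (E B 3) 4 + m (E B 4) (E B 5) 4 * m (E B 2)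 (E B 4) 4 + m (E B 4) (E B 5) 5 * m (E B 2) (E B 5) 4 := by
    have hh := congrFun ha_2_4_5 4
    simp [Eval] at hh
    first
      | linear_combination hh
      | linear_combination -hh
  rw [L_1_2_4, L_1_5_4, L_2_2_4, L_2_3_4, L_2_4_1, L_2_4_2, L_2_4_3, L_2_4_5, L_2_5_4, L_3_5_4, L_4_5_1, L_4_5_2, L_4_5_3, L_4_5_5, L_5_5_4] at A_2_4_5_4
  have A_2_4_5_5 : m (E B 2) (E B 4) 0 + m (E B 2) (E B 4) 1 * m (E B 1) (E B 5) 5 + m (E B 2) (E B 4) 2 * m (E B 2) (E B 5) 5 + m (E B 2) (E B 4) 3 * m (E B 3) (E B 5) 5 + m (E B 2) (E B 4) 4 * m (E B 4) (E B 5) 5 + m (E B 2) (E B 4) 5 * m (E B 5) (E B 5) 5 = m (E B 4) (E B 5) 1 * m (E B 1) (E B 2) 5 + m (E B 4) (E B 5) 2 * m (E B 2) (E B 2) 5 + m (E B 4) (E B 5) 3 * m (E B 2) (E B 3) 5 + m (E B 4) (E B 5) 4 * m (E B 2) (E B 4) 5 + m (E B 4) (E B 5) 5 * m (E B 2) (E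 B 5) 5 := by
    have hh := congrFun ha_2_4_5 5
    simp [Eval] at hh
    first
      | linear_combination hh
      | linear_combination -hh
  rw [L_1_2_5, L_1_5_5, L_2_2_5, L_2_3_5, L_2_4_1, L_2_4_2, L_2_4_3, L_2_4_4, L_2_4_5, L_2_5_5, L_3_5_5, L_4_5_1, L_4_5_2, L_4_5_3, L_4_5_4, L_4_5_5, L_5_5_5] at A_2_4_5_5
  have ha_3_3_5 := hassoc (E B 3) (E B 3) (E B 5)
  rw [hx1 (m (E B 3) (E B 3)) 5, hx2 3 (m (E B 3) (E B 5))] at ha_3_3_5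
  rw [hcomm (E B 3) (E B 1)] at ha_3_3_5
  rw [hcomm (E B 3) (E B 2)] at ha_3_3_5
  have A_3_3_5_2 : m (E B 3) (E B 3) 1 * m (E B 1) (E B 5) 2 + m (E B 3) (E B 3) 2 * m (E B 2) (E B 5) 2 + m (E B 3) (E B 3) 3 * m (E B 3) (E B 5) 2 + m (E B 3) (E B 3) 4 * m (E B 4) (E B 5) 2 + m (E B 3) (E B 3) 5 * m (E B 5) (E B 5) 2 = m (E B 3) (E B 5) 1 * m (E B 1) (E B 3) 2 + m (E B 3) (E B 5) 2 * m (E B 2) (E B 3) 2 + m (E B 3) (E B 5) 3 * m (E B 3) (E B 3) 2 + m (E B 3) (E B 5) 4 * m (E B 3) (E B 4) 2 + m (E B 3) (E B 5) 5 * m (E B 3) (E B 5) 2 := by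
    have hh := congrFun ha_3_3_5 2
    simp [Eval] at hh
    first
      | linear_combination hh
      | linear_combination -hh
  rw [L_1_5_2, L_2_5_2, L_3_3_1, L_3_3_4, L_3_3_5, L_3_4_2, L_3_5_1, L_3_5_2, L_3_5_3, L_3_5_4, L_3_5_5, L_4_5_2, L_5_5_2] at A_3_3_5_2
  have A_3_3_5_3 : m (E B 3) (E B 3) 1 * m (E B 1) (E B 5) 3 + m (E B 3) (E B 3) 2 * m (E B 2) (E B 5) 3 + m (E B 3) (E B 3) 3 * m (E B 3) (E B 5) 3 + m (E B 3) (E B 3) 4 * m (E B 4) (E B 5) 3 + m (E B 3) (E B 3) 5 * m (E B 5) (E B 5) 3 = m (E B 3) (E B 5) 0 + m (E B 3) (E B 5) 1 * m (E B 1) (E B 3) 3 + m (E B 3) (E B 5) 2 * m (E B 2) (E B 3) 3 + m (E B 3) (E B 5) 3 * m (E B 3) (E B 3) 3 + m (E B 3) (E B 5) 4 * m (E B 3) (E B 4) 3 + m (E B 3) (E B 5) 5 * m (E B 3) (E B 5) 3 := by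
    have hh := congrFun ha_3_3_5 3
    simp [Eval] at hh
    first
      | linear_combination hh
      | linear_combination -hh
  rw [L_1_5_3, L_2_5_3, L_3_3_1, L_3_3_4, L_3_3_5, L_3_4_3, L_3_5_1, L_3_5_2, L_3_5_3, L_3_5_4, L_3_5_5, L_4_5_3, L_5_5_3] at A_3_3_5_3
  set H : B := m (E B 2) (E B 5) 1 with sH
  set K : B := m (E B 1) (E B 1) 0 with sK
  set Pp : B := m (E B 2) (E B 5) 0 with sPp
  set a : B := m (E B 2) (E B 3) 2 with sa
  set b : B := m (E B 2) (E B 3) 3 with sb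
  set b1 : B := m (E B 1) (E B 2) 2 with sb1
  set b2 : B := m (E B 1) (E B 2) 3 with sb2
  set c1 : B := m (E B 1) (E B 3) 2 with sc1
  set c2 : B := m (E B 1) (E B 3) 3 with sc2
  set d3 : B := m (E B 2) (E B 2) 2 with sd3
  set d4 : B := m (E B 2) (E B 2) 3 with sd4
  set f3 : B := m (E B 3) (E B 3) 2 with sf3
  set f4 : B := m (E B 3) (E B 3) 3 with sf4
  set p : B := m (E B 2) (E B 4) 0 with sp
  set q : B := m (E B 3) (E B 5) 0 with sq
  have hc2 : c2 = -b1 := by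
    by_contra hne
    have hsum : b1 + c2 ≠ 0 := fun h => hne (by linear_combination h)
    have hb2z : b2 = 0 := by
      have h1 : b2 * (b1 + c2) = 0 := can3 (b2 * (b1 + c2)) (by linear_combination A_1_1_2_3)
      exact (mul_eq_zero.mp h1).resolve_right hsum
    have hc1z : c1 = 0 := by
      have h1 : c1 * (b1 + c2) = 0 := can3 (c1 * (b1 + c2)) (by linear_combination A_1_1_3_2)
      exact (mul_eq_zero.mp h1).resolve_right hsum
    have hcb : c2 = b1 := by
      have h1 : (c2 - b1) * (c2 + b1) = 0 := can3 ((c2 - b1) * (c2 + b1)) (by linear_combination A_1_1_3_3 - A_1_1_2_2)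
      rcases mul_eq_zero.mp h1 with h | h
      · linear_combination h
      · exact absurd (show b1 + c2 = 0 by linear_combination h) hsum
    have hb1n : b1 ≠ 0 := fun h0 => hsum (by linear_combination hcb + 2*h0)
    have hHz : H = 0 := by
      have h1 : b1 * H = 0 := can2 (b1 * H) (can2 (2 * (b1 * H)) (by linear_combination A_1_2_3_1 - 2*A_1_3_4_1 - 2*H*hcb))
      exact (mul_eq_zero.mp h1).resolve_left hb1n
    have hpz : p = 0 := can2 p (by linear_combination -A_1_2_2_1 - 2*b2*hHz)
    have hd3z : d3 = 0 := by
      have h1 : b1 * d3 = 0 := can6 (b1 * d3) (by linear_combination A_1_2_2_2 - 3*d4*hc1z - 3*a*hb2z)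
      exact (mul_eq_zero.mp h1).resolve_left hb1n
    have hd4z : d4 = 0 := by
      have h1 : b1 * d4 = 0 := can6 (b1 * d4) (by linear_combination A_1_2_2_3 - 3*(b + d3)*hb2z - 3*d4*hcb)
      exact (mul_eq_zero.mp h1).resolve_left hb1n
    have hzero : m (E B 2) (E B 2) = 0 := by
      have z0 : m (E B 2) (E B 2) 0 = 0 := by linear_combination L_2_2_0 + 2*hpz
      have z1 : m (E B 2) (E B 2) 1 = 0 := by linear_combination L_2_2_1
      have z2 : m (E B 2) (E B 2) 2 = 0 := by linear_combination hd3z - 1*sd3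
      have z3 : m (E B 2) (E B 2) 3 = 0 := by linear_combination hd4z - 1*sd4
      have z4 : m (E B 2) (E B 2) 4 = 0 := by linear_combination L_2_2_4 - 2*hd3z
      have z5 : m (E B 2) (E B 2) 5 = 0 := by linear_combination L_2_2_5 - 2*hd4z
      conv_lhs => rw [basis (m (E B 2) (E B 2))]
      rw [z0, z1, z2, z3, z4, z5]
      funext r
      fin_cases r <;> simp [Eval]
    rcases hintegral _ _ hzero with h | h <;> exact hEne 2 h
  have hbeta : b + d3 = 0 := by
    by_contra hB
    have haz : a = 0 := by
      have h1 : a * (b + d3) = 0 := can3 (a * (b + d3)) (by linear_combination -A_2_4_5_4)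
      exact (mul_eq_zero.mp h1).resolve_right hB
    have hd4z : d4 = 0 := by
      have h1 : d4 * (b + d3) = 0 := can3 (d4 * (b + d3)) (by linear_combination A_2_2_4_3)
      exact (mul_eq_zero.mp h1).resolve_right hB
    have hHz : H = 0 := by
      have h1 : H * (b + d3) = 0 := can2 (H * (b + d3)) (by linear_combination A_2_2_3_1)
      exact (mul_eq_zero.mp h1).resolve_right hB
    have hqz : q = 0 := can2 q (by linear_combination -A_1_3_3_1 + 2*c1*hHz)
    have hf3b : f3 * b = 0 := can3 (f3 * b) (by linear_combination A_2_3_5_2 - 3*a*haz + hqz)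
    have hf4z : f4 = 0 := by
      have h1 : f4 * f4 = 0 := can3 (f4 * f4) (by linear_combination A_3_3_5_3 + hqz - 3*hf3b)
      rcases mul_eq_zero.mp h1 with h | h <;> exact h
    have hbd3 : b = d3 := by
      have h1 : (b - d3) * (b + d3) = 0 := can3 ((b - d3) * (b + d3)) (by linear_combination -A_2_4_5_5 - A_2_2_4_2)
      have h2 := (mul_eq_zero.mp h1).resolve_right hB
      linear_combination h2
    have hd3n : d3 ≠ 0 := fun h0 => hB (by linear_combination hbd3 + 2*h0)
    have hf3z : f3 = 0 := by
      have h1 : f3 * d3 = 0 := by linear_combination hf3b - f3*hbd3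
      exact (mul_eq_zero.mp h1).resolve_right hd3n
    have hzero : m (E B 3) (E B 3) = 0 := by
      have z0 : m (E B 3) (E B 3) 0 = 0 := by linear_combination L_3_3_0 + 2*hqz
      have z1 : m (E B 3) (E B 3) 1 = 0 := by linear_combination L_3_3_1
      have z2 : m (E B 3) (E B 3) 2 = 0 := by linear_combination hf3z - 1*sf3
      have z3 : m (E B 3) (E B 3) 3 = 0 := by linear_combination hf4z - 1*sf4
      have z4 : m (E B 3) (E B 3) 4 = 0 := by linear_combination L_3_3_4 - 2*hf3z
      have z5 : m (E B 3) (E B 3) 5 = 0 := by linear_combination L_3_3_5 - 2*hf4z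
      conv_lhs => rw [basis (m (E B 3) (E B 3))]
      rw [z0, z1, z2, z3, z4, z5]
      funext r
      fin_cases r <;> simp [Eval]
    rcases hintegral _ _ hzero with h | h <;> exact hEne 3 h
  have halpha : a + f4 = 0 := by
    by_contra hA
    have hbz : b = 0 := by
      have h1 : b * (a + f4) = 0 := can3 (b * (a + f4)) (by linear_combination A_2_3_5_3)
      exact (mul_eq_zero.mp h1).resolve_right hA
    have hf3z : f3 = 0 := by
      have h1 : f3 * (a + f4) = 0 := can3 (f3 * (a + f4)) (by linear_combination A_3_3_5_2)
      exact (mul_eq_zero.mp h1).resolve_right hA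
    have hHz : H = 0 := by
      have h1 : H * (a + f4) = 0 := can2 (H * (a + f4)) (by linear_combination A_2_3_3_1)
      exact (mul_eq_zero.mp h1).resolve_right hA
    have hqz : q = 0 := can2 q (by linear_combination -A_1_3_3_1 + 2*c1*hHz)
    have haz : a = 0 := by
      have h1 : a * a = 0 := can3 (a * a) (by linear_combination A_2_3_5_2 + hqz - 3*b*hf3z)
      rcases mul_eq_zero.mp h1 with h | h <;> exact h
    have hf4z : f4 = 0 := by
      have h1 : f4 * f4 = 0 := can3 (f4 * f4) (by linear_combination A_3_3_5_3 + hqz - 3*b*hf3z)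
      rcases mul_eq_zero.mp h1 with h | h <;> exact h
    exact hA (by linear_combination haz + hf4z)
  have hp3 : p = 3*(d3^2 - d4*f4) := by linear_combination -1*A_2_2_4_2 + 3*d4*halpha
  have hq3 : q = 3*(f4^2 - d3*f3) := by linear_combination -1*A_3_3_5_3 + 3*f3*hbeta
  have hPp0 : 2*(2*Pp - 3*(d4*f3 - d3*f4)) = 0 := by linear_combination -2*A_2_2_5_2 + 6*d3*halpha - A_1_2_3_1
  have hPp2 : 2*Pp = 3*(d4*f3 - d3*f4) := by linear_combination can2 _ hPp0
  have hPp6 : Pp = 9*⅟(6:B)*(d4*f3 - d3*f4) := half _ _ hPp2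
  have hi1 : 2 * b1 * d3 - b2 * f4 + c1 * d4 = 0 := can3 _ (by linear_combination A_1_2_2_2 - 3*b2*halpha)
  have hi2 : 2 * b1 * f4 - b2 * f3 + c1 * d3 = 0 := can3 _ (by linear_combination -A_1_2_3_2 + 3*c1*hbeta + 6*b1*halpha)
  have hiii0 : 2*(2*((b1^2 + b2*c1)*H) - 3*(b1*(d4*f3 - d3*f4) + b2*(f4^2 - d3*f3) + c1*(d4*f4 - d3^2))) = 0 := by
    linear_combination 2*b1*A_1_2_3_1 + 2*b1*hPp2 + b2*A_1_3_3_1 + 2*b2*hq3 - c1*A_1_2_2_1 - 2*c1*hp3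
  have hiii2 : 2*((b1^2 + b2*c1)*H) = 3*(b1*(d4*f3 - d3*f4) + b2*(f4^2 - d3*f3) + c1*(d4*f4 - d3^2)) := by linear_combination can2 _ hiii0
  have hiii := half _ _ hiii2
  refine ⟨b1, b2, c1, d3, d4, f3, f4, H, ?_, ?_, ?_, ?_, ?_, ?_, ?_, ?_, ?_, ?_, ?_, ?_, ?_, ?_, ?_, ?_, ?_, ?_⟩
  · linear_combination hi1
  · linear_combination hi2
  · linear_combination hiii
  · have e0 : m (E B 1) (E B 1) 0 = -3*b1^2 - 3*b2*c1 := by linear_combination -1*sK + A_1_1_2_2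
    have e1 : m (E B 1) (E B 1) 1 = 0 := by linear_combination L_1_1_1
    have e2 : m (E B 1) (E B 1) 2 = 0 := by linear_combination L_1_1_2
    have e3 : m (E B 1) (E B 1) 3 = 0 := by linear_combination L_1_1_3
    have e4 : m (E B 1) (E B 1) 4 = 0 := by linear_combination L_1_1_4
    have e5 : m (E B 1) (E B 1) 5 = 0 := by linear_combination L_1_1_5
    conv_lhs => rw [basis (m (E B 1) (E B 1))]
    rw [e0, e1, e2, e3, e4, e5]
    try (funext r; fin_cases r <;> simp [Eval] <;> try ring)
  · have e0 : m (E B 1) (E B 2) 0 = 0 := by linear_combination L_1_2_0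
    have e1 : m (E B 1) (E B 2) 1 = 0 := by linear_combination L_1_2_1
    have e2 : m (E B 1) (E B 2) 2 = b1 := by linear_combination -1*sb1
    have e3 : m (E B 1) (E B 2) 3 = b2 := by linear_combination -1*sb2
    have e4 : m (E B 1) (E B 2) 4 = -2*b1 := by linear_combination L_1_2_4
    have e5 : m (E B 1) (E B 2) 5 = -2*b2 := by linear_combination L_1_2_5
    conv_lhs => rw [basis (m (E B 1) (E B 2))]
    rw [e0, e1, e2, e3, e4, e5]
    try (funext r; fin_cases r <;> simp [Eval] <;> try ring)
  · have e0 : m (E B 1) (E B 3) 0 = 0 := by linear_combination L_1_3_0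
    have e1 : m (E B 1) (E B 3) 1 = 0 := by linear_combination L_1_3_1
    have e2 : m (E B 1) (E B 3) 2 = c1 := by linear_combination -1*sc1
    have e3 : m (E B 1) (E B 3) 3 = -b1 := by linear_combination -1*sc2 + hc2
    have e4 : m (E B 1) (E B 3) 4 = -2*c1 := by linear_combination L_1_3_4
    have e5 : m (E B 1) (E B 3) 5 = 2*b1 := by linear_combination L_1_3_5 - 2*hc2
    conv_lhs => rw [basis (m (E B 1) (E B 3))]
    rw [e0, e1, e2, e3, e4, e5]
    try (funext r; fin_cases r <;> simp [Eval] <;> try ring)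
  · have e0 : m (E B 1) (E B 4) 0 = 0 := by linear_combination L_1_4_0
    have e1 : m (E B 1) (E B 4) 1 = 0 := by linear_combination L_1_4_1
    have e2 : m (E B 1) (E B 4) 2 = 2*b1 := by linear_combination L_1_4_2
    have e3 : m (E B 1) (E B 4) 3 = 2*b2 := by linear_combination L_1_4_3
    have e4 : m (E B 1) (E B 4) 4 = -b1 := by linear_combination L_1_4_4
    have e5 : m (E B 1) (E B 4) 5 = -b2 := by linear_combination L_1_4_5
    conv_lhs => rw [basis (m (E B 1) (E B 4))]
    rw [e0, e1, e2, e3, e4, e5]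
    try (funext r; fin_cases r <;> simp [Eval] <;> try ring)
  · have e0 : m (E B 1) (E B 5) 0 = 0 := by linear_combination L_1_5_0
    have e1 : m (E B 1) (E B 5) 1 = 0 := by linear_combination L_1_5_1
    have e2 : m (E B 1) (E B 5) 2 = 2*c1 := by linear_combination L_1_5_2
    have e3 : m (E B 1) (E B 5) 3 = -2*b1 := by linear_combination L_1_5_3 + 2*hc2
    have e4 : m (E B 1) (E B 5) 4 = -c1 := by linear_combination L_1_5_4
    have e5 : m (E B 1) (E B 5) 5 = b1 := by linear_combination L_1_5_5 - 1*hc2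
    conv_lhs => rw [basis (m (E B 1) (E B 5))]
    rw [e0, e1, e2, e3, e4, e5]
    try (funext r; fin_cases r <;> simp [Eval] <;> try ring)
  · have e0 : m (E B 2) (E B 2) 0 = 6*(d3^2 - d4*f4) := by linear_combination L_2_2_0 + 2*hp3
    have e1 : m (E B 2) (E B 2) 1 = 0 := by linear_combination L_2_2_1
    have e2 : m (E B 2) (E B 2) 2 = d3 := by linear_combination -1*sd3
    have e3 : m (E B 2) (E B 2) 3 = d4 := by linear_combination -1*sd4
    have e4 : m (E B 2) (E B 2) 4 = -2*d3 := by linear_combination L_2_2_4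
    have e5 : m (E B 2) (E B 2) 5 = -2*d4 := by linear_combination L_2_2_5
    conv_lhs => rw [basis (m (E B 2) (E B 2))]
    rw [e0, e1, e2, e3, e4, e5]
    try (funext r; fin_cases r <;> simp [Eval] <;> try ring)
  · have e0 : m (E B 2) (E B 3) 0 = 3*(d4*f3 - d3*f4) := by linear_combination L_2_3_0 + hPp2
    have e1 : m (E B 2) (E B 3) 1 = 0 := by linear_combination L_2_3_1
    have e2 : m (E B 2) (E B 3) 2 = -f4 := by linear_combination -1*sa + halpha
    have e3 : m (E B 2) (E B 3) 3 = -d3 := by linear_combination -1*sb + hbeta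
    have e4 : m (E B 2) (E B 3) 4 = 2*f4 := by linear_combination L_2_3_4 - 2*halpha
    have e5 : m (E B 2) (E B 3) 5 = 2*d3 := by linear_combination L_2_3_5 - 2*hbeta
    conv_lhs => rw [basis (m (E B 2) (E B 3))]
    rw [e0, e1, e2, e3, e4, e5]
    try (funext r; fin_cases r <;> simp [Eval] <;> try ring)
  · have e0 : m (E B 3) (E B 3) 0 = 6*(f4^2 - d3*f3) := by linear_combination L_3_3_0 + 2*hq3
    have e1 : m (E B 3) (E B 3) 1 = 0 := by linear_combination L_3_3_1
    have e2 : m (E B 3) (E B 3) 2 = f3 := by linear_combination -1*sf3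
    have e3 : m (E B 3) (E B 3) 3 = f4 := by linear_combination -1*sf4
    have e4 : m (E B 3) (E B 3) 4 = -2*f3 := by linear_combination L_3_3_4
    have e5 : m (E B 3) (E B 3) 5 = -2*f4 := by linear_combination L_3_3_5
    conv_lhs => rw [basis (m (E B 3) (E B 3))]
    rw [e0, e1, e2, e3, e4, e5]
    try (funext r; fin_cases r <;> simp [Eval] <;> try ring)
  · have e0 : m (E B 2) (E B 4) 0 = 3*(d3^2 - d4*f4) := by linear_combination -1*sp + hp3
    have e1 : m (E B 2) (E B 4) 1 = 0 := by linear_combination L_2_4_1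
    have e2 : m (E B 2) (E B 4) 2 = -d3 := by linear_combination L_2_4_2
    have e3 : m (E B 2) (E B 4) 3 = -d4 := by linear_combination L_2_4_3
    have e4 : m (E B 2) (E B 4) 4 = -d3 := by linear_combination L_2_4_4
    have e5 : m (E B 2) (E B 4) 5 = -d4 := by linear_combination L_2_4_5
    conv_lhs => rw [basis (m (E B 2) (E B 4))]
    rw [e0, e1, e2, e3, e4, e5]
    try (funext r; fin_cases r <;> simp [Eval] <;> try ring)
  · have e0 : m (E B 2) (E B 5) 0 = 9*⅟(6:B)*(d4*f3 - d3*f4) := by linear_combination -1*sPp + hPp6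
    have e1 : m (E B 2) (E B 5) 1 = H := by linear_combination -1*sH
    have e2 : m (E B 2) (E B 5) 2 = f4 := by linear_combination L_2_5_2 - 1*halpha
    have e3 : m (E B 2) (E B 5) 3 = d3 := by linear_combination L_2_5_3 - 1*hbeta
    have e4 : m (E B 2) (E B 5) 4 = f4 := by linear_combination L_2_5_4 - 1*halpha
    have e5 : m (E B 2) (E B 5) 5 = d3 := by linear_combination L_2_5_5 - 1*hbeta
    conv_lhs => rw [basis (m (E B 2) (E B 5))]
    rw [e0, e1, e2, e3, e4, e5]
    try (funext r; fin_cases r <;> simp [Eval] <;> try ring)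
  · have e0 : m (E B 3) (E B 4) 0 = 9*⅟(6:B)*(d4*f3 - d3*f4) := by linear_combination L_3_4_0 + hPp6
    have e1 : m (E B 3) (E B 4) 1 = -H := by linear_combination L_3_4_1
    have e2 : m (E B 3) (E B 4) 2 = f4 := by linear_combination L_3_4_2 - 1*halpha
    have e3 : m (E B 3) (E B 4) 3 = d3 := by linear_combination L_3_4_3 - 1*hbeta
    have e4 : m (E B 3) (E B 4) 4 = f4 := by linear_combination L_3_4_4 - 1*halpha
    have e5 : m (E B 3) (E B 4) 5 = d3 := by linear_combination L_3_4_5 - 1*hbeta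
    conv_lhs => rw [basis (m (E B 3) (E B 4))]
    rw [e0, e1, e2, e3, e4, e5]
    try (funext r; fin_cases r <;> simp [Eval] <;> try ring)
  · have e0 : m (E B 3) (E B 5) 0 = 3*(f4^2 - d3*f3) := by linear_combination -1*sq + hq3
    have e1 : m (E B 3) (E B 5) 1 = 0 := by linear_combination L_3_5_1
    have e2 : m (E B 3) (E B 5) 2 = -f3 := by linear_combination L_3_5_2
    have e3 : m (E B 3) (E B 5) 3 = -f4 := by linear_combination L_3_5_3
    have e4 : m (E B 3) (E B 5) 4 = -f3 := by linear_combination L_3_5_4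
    have e5 : m (E B 3) (E B 5) 5 = -f4 := by linear_combination L_3_5_5
    conv_lhs => rw [basis (m (E B 3) (E B 5))]
    rw [e0, e1, e2, e3, e4, e5]
    try (funext r; fin_cases r <;> simp [Eval] <;> try ring)
  · have e0 : m (E B 4) (E B 4) 0 = 6*(d3^2 - d4*f4) := by linear_combination L_4_4_0 + 2*hp3
    have e1 : m (E B 4) (E B 4) 1 = 0 := by linear_combination L_4_4_1
    have e2 : m (E B 4) (E B 4) 2 = -2*d3 := by linear_combination L_4_4_2
    have e3 : m (E B 4) (E B 4) 3 = -2*d4 := by linear_combination L_4_4_3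
    have e4 : m (E B 4) (E B 4) 4 = d3 := by linear_combination L_4_4_4
    have e5 : m (E B 4) (E B 4) 5 = d4 := by linear_combination L_4_4_5
    conv_lhs => rw [basis (m (E B 4) (E B 4))]
    rw [e0, e1, e2, e3, e4, e5]
    try (funext r; fin_cases r <;> simp [Eval] <;> try ring)
  · have e0 : m (E B 4) (E B 5) 0 = 3*(d4*f3 - d3*f4) := by linear_combination L_4_5_0 + hPp2
    have e1 : m (E B 4) (E B 5) 1 = 0 := by linear_combination L_4_5_1
    have e2 : m (E B 4) (E B 5) 2 = 2*f4 := by linear_combination L_4_5_2 - 2*halpha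
    have e3 : m (E B 4) (E B 5) 3 = 2*d3 := by linear_combination L_4_5_3 - 2*hbeta
    have e4 : m (E B 4) (E B 5) 4 = -f4 := by linear_combination L_4_5_4 + halpha
    have e5 : m (E B 4) (E B 5) 5 = -d3 := by linear_combination L_4_5_5 + hbeta
    conv_lhs => rw [basis (m (E B 4) (E B 5))]
    rw [e0, e1, e2, e3, e4, e5]
    try (funext r; fin_cases r <;> simp [Eval] <;> try ring)
  · have e0 : m (E B 5) (E B 5) 0 = 6*(f4^2 - d3*f3) := by linear_combination L_5_5_0 + 2*hq3
    have e1 : m (E B 5) (E B 5) 1 = 0 := by linear_combination L_5_5_1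
    have e2 : m (E B 5) (E B 5) 2 = -2*f3 := by linear_combination L_5_5_2
    have e3 : m (E B 5) (E B 5) 3 = -2*f4 := by linear_combination L_5_5_3
    have e4 : m (E B 5) (E B 5) 4 = f3 := by linear_combination L_5_5_4
    have e5 : m (E B 5) (E B 5) 5 = f4 := by linear_combination L_5_5_5
    conv_lhs => rw [basis (m (E B 5) (E B 5))]
    rw [e0, e1, e2, e3, e4, e5]
    try (funext r; fin_cases r <;> simp [Eval] <;> try ring)
end
end

section
/- Let B be a commutative ring in which 6 is invertible, and let A be the free B-module with basis {1, t, v₁, v₂, w₁, w₂}, equipped with the S₃-action described in the context. Suppose A carries a commutative B-bilinear multiplication with unit 1 such that every element of S₃ acts as a ring automorphism (associativity is not assumed). Then there exist a, b₁, b₂, c₁, c₂, d₁, d₃, d₄, e₁, e₃, e₄, f₁, f₃, f₄, h₂, h₃, h₄ ∈ B such that: t² = a·1; t·v₁ = b₁v₁ + b₂v₂ − 2b₁w₁ − 2b₂w₂; t·v₂ = c₁v₁ + c₂v₂ − 2c₁w₁ − 2c₂w₂; t·w₁ = 2b₁v₁ + 2b₂v₂ − b₁w₁ − b₂w₂; t·w₂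 = 2c₁v₁ + 2c₂v₂ − c₁w₁ − c₂w₂; v₁² = d₁·1 + d₃v₁ + d₄v₂ − 2d₃w₁ − 2d₄w₂; v₁v₂ = e₁·1 + e₃v₁ + e₄v₂ − 2e₃w₁ − 2e₄w₂; v₂² = f₁·1 + f₃v₁ + f₄v₂ − 2f₃w₁ − 2f₄w₂; v₁w₁ = (1/2)d₁·1 − d₃v₁ − d₄v₂ − d₃w₁ − d₄w₂; v₁w₂ = (1/2)e₁·1 + h₂t + h₃v₁ + h₄v₂ − e₃w₁ − e₄w₂; v₂w₁ = (1/2)e₁·1 − h₂t − e₃v₁ − e₄v₂ + h₃w₁ + h₄w₂; v₂w₂ = (1/2)f₁·1 − f₃v₁ − f₄v₂ − f₃w₁ − f₄w₂; w₁² = d₁·1 − 2d₃v₁ − 2d₄v₂ + d₃w₁ + d₄w₂; w₁w₂ = e₁·1 − 2e₃v₁ − 2e₄v₂ + e₃w₁ + e₄w₂; w₂² = f₁·1 − 2f₃v₁ − 2f₄v₂ + f₃w₁ + f₄w₂. -/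
noncomputable section

private lemma Edecomp {B : Type*} [CommRing B] (x : Fin 6 → B) :
    x = x 0 • E B 0 + x 1 • E B 1 + x 2 • E B 2 + x 3 • E B 3 + x 4 • E B 4 + x 5 • E B 5 := by
  funext k
  fin_cases k <;> simp [E, Pi.single_apply]

private lemma E_apply {B : Type*} [CommRing B] (i k : Fin 6) :
    E B i k = if k = i then 1 else 0 := by
  rw [E, Pi.single_apply]

set_option maxHeartbeats 2000000 in
/-- **Lemma: commutative `S₃`-compatible multiplications, no associativity.**
Let `B` be a commutative ring with `6` invertible and `A = B⟨1,t,v₁,v₂,w₁,w₂⟩` the free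
`B`-module with the `S₃`-action of the context.  If `m` is a commutative `B`-bilinear
multiplication on `A` with unit `1` such that every element of `S₃` acts as a ring
automorphism, then there exist constants
`a, b₁, b₂, c₁, c₂, d₁, d₃, d₄, e₁, e₃, e₄, f₁, f₃, f₄, h₂, h₃, h₄ ∈ B` realising the
multiplication table displayed below. -/
theorem statement2 (B : Type*) [CommRing B] [Invertible (6 : B)]
    (ρ : Equiv.Perm (Fin 3) →* ((Fin 6 → B) ≃ₗ[B] (Fin 6 → B)))
    (hσ0 : ρ σ (E B 0) = E B 0)
    (hσt : ρ σ (E B 1) = E B 1)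
    (hσv1 : ρ σ (E B 2) = -E B 4)
    (hσv2 : ρ σ (E B 3) = -E B 5)
    (hσw1 : ρ σ (E B 4) = E B 2 - E B 4)
    (hσw2 : ρ σ (E B 5) = E B 3 - E B 5)
    (hτ0 : ρ τ (E B 0) = E B 0)
    (hτt : ρ τ (E B 1) = -E B 1)
    (hτv1 : ρ τ (E B 2) = E B 4)
    (hτv2 : ρ τ (E B 3) = E B 5)
    (hτw1 : ρ τ (E B 4) = E B 2)
    (hτw2 : ρ τ (E B 5) = E B 3)
    (m : (Fin 6 → B) →ₗ[B] (Fin 6 → B) →ₗ[B] (Fin 6 → B))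
    (hone : ∀ x, m (E B 0) x = x)
    (hcomm : ∀ x y, m x y = m y x)
    (hunits : ∀ g : Equiv.Perm (Fin 3), ρ g (E B 0) = E B 0)
    (hequiv : ∀ (g : Equiv.Perm (Fin 3)) (x y : Fin 6 → B),
      ρ g (m x y) = m (ρ g x) (ρ g y)) :
    ∃ a b₁ b₂ c₁ c₂ d₁ d₃ d₄ e₁ e₃ e₄ f₁ f₃ f₄ h₂ h₃ h₄ : B,
      m (E B 1) (E B 1) = a • E B 0 ∧
      m (E B 1) (E B 2) =
        b₁ • E B 2 + b₂ • E B 3 - (2 * b₁) • E B 4 - (2 * b₂) • E B 5 ∧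
      m (E B 1) (E B 3) =
        c₁ • E B 2 + c₂ • E B 3 - (2 * c₁) • E B 4 - (2 * c₂) • E B 5 ∧
      m (E B 1) (E B 4) =
        (2 * b₁) • E B 2 + (2 * b₂) • E B 3 - b₁ • E B 4 - b₂ • E B 5 ∧
      m (E B 1) (E B 5) =
        (2 * c₁) • E B 2 + (2 * c₂) • E B 3 - c₁ • E B 4 - c₂ • E B 5 ∧
      m (E B 2) (E B 2) =
        d₁ • E B 0 + d₃ • E B 2 + d₄ • E B 3 - (2 * d₃) • E B 4 - (2 * d₄) • E B 5 ∧
      m (E B 2) (E B 3) =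
        e₁ • E B 0 + e₃ • E B 2 + e₄ • E B 3 - (2 * e₃) • E B 4 - (2 * e₄) • E B 5 ∧
      m (E B 3) (E B 3) =
        f₁ • E B 0 + f₃ • E B 2 + f₄ • E B 3 - (2 * f₃) • E B 4 - (2 * f₄) • E B 5 ∧
      m (E B 2) (E B 4) =
        ((3 * ⅟(6 : B)) * d₁) • E B 0 - d₃ • E B 2 - d₄ • E B 3 -
          d₃ • E B 4 - d₄ • E B 5 ∧
      m (E B 2) (E B 5) =
        ((3 * ⅟(6 : B)) * e₁) • E B 0 + h₂ • E B 1 + h₃ • E B 2 + h₄ • E B 3 -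
          e₃ • E B 4 - e₄ • E B 5 ∧
      m (E B 3) (E B 4) =
        ((3 * ⅟(6 : B)) * e₁) • E B 0 - h₂ • E B 1 - e₃ • E B 2 - e₄ • E B 3 +
          h₃ • E B 4 + h₄ • E B 5 ∧
      m (E B 3) (E B 5) =
        ((3 * ⅟(6 : B)) * f₁) • E B 0 - f₃ • E B 2 - f₄ • E B 3 -
          f₃ • E B 4 - f₄ • E B 5 ∧
      m (E B 4) (E B 4) =
        d₁ • E B 0 - (2 * d₃) • E B 2 - (2 * d₄) • E B 3 + d₃ • E B 4 + d₄ • E B 5 ∧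
      m (E B 4) (E B 5) =
        e₁ • E B 0 - (2 * e₃) • E B 2 - (2 * e₄) • E B 3 + e₃ • E B 4 + e₄ • E B 5 ∧
      m (E B 5) (E B 5) =
        f₁ • E B 0 - (2 * f₃) • E B 2 - (2 * f₄) • E B 3 + f₃ • E B 4 + f₄ • E B 5
 := by
  -- arithmetic helpers
  have h6 : (6:B) * ⅟(6:B) = 1 := mul_invOf_self 6
  have two_half : (2:B) * (3 * ⅟(6:B)) = 1 := by linear_combination h6
  have three_third : (3:B) * (2 * ⅟(6:B)) = 1 := by linear_combination h6
  have h2can : ∀ x : B, x + x = 0 → x = 0 := fun x h => by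
    linear_combination (3 * ⅟(6:B)) * h - x * two_half
  have h3can : ∀ x : B, x + x + x = 0 → x = 0 := fun x h => by
    linear_combination (2 * ⅟(6:B)) * h - x * three_third
  -- coordinate description of the action
  have hS : ∀ P : Fin 6 → B, ρ σ P = P 0 • E B 0 + P 1 • E B 1 + P 4 • E B 2 + P 5 • E B 3
      + (-(P 2) - P 4) • E B 4 + (-(P 3) - P 5) • E B 5 := by
    intro P
    conv_lhs => rw [Edecomp P]
    simp only [map_add, map_smul, hσ0, hσt, hσv1, hσv2, hσw1, hσw2]
    module
  have hT : ∀ P : Fin 6 → B, ρ τ P = P 0 • E B 0 + (-(P 1)) • E B 1 + P 4 • E B 2 + P 5 • E B 3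
      + P 2 • E B 4 + P 3 • E B 5 := by
    intro P
    conv_lhs => rw [Edecomp P]
    simp only [map_add, map_smul, hτ0, hτt, hτv1, hτv2, hτw1, hτw2]
    module
  -- equivariance equations
  have eσ11 : ρ σ (m (E B 1) (E B 1)) = m (E B 1) (E B 1) := by rw [hequiv, hσt]
  have eτ11 : ρ τ (m (E B 1) (E B 1)) = m (E B 1) (E B 1) := by
    rw [hequiv, hτt]; simp [map_neg, LinearMap.neg_apply]
  have eσ12 : ρ σ (m (E B 1) (E B 2)) = -(m (E B 1) (E B 4)) := by
    rw [hequiv, hσt, hσv1, map_neg]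
  have eτ12 : ρ τ (m (E B 1) (E B 2)) = -(m (E B 1) (E B 4)) := by
    rw [hequiv, hτt, hτv1]; simp [map_neg, LinearMap.neg_apply]
  have eσ14 : ρ σ (m (E B 1) (E B 4)) = m (E B 1) (E B 2) - m (E B 1) (E B 4) := by
    rw [hequiv, hσt, hσw1, map_sub]
  have eσ13 : ρ σ (m (E B 1) (E B 3)) = -(m (E B 1) (E B 5)) := by
    rw [hequiv, hσt, hσv2, map_neg]
  have eτ13 : ρ τ (m (E B 1) (E B 3)) = -(m (E B 1) (E B 5)) := by
    rw [hequiv, hτt, hτv2]; simp [map_neg, LinearMap.neg_apply]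
  have eσ15 : ρ σ (m (E B 1) (E B 5)) = m (E B 1) (E B 3) - m (E B 1) (E B 5) := by
    rw [hequiv, hσt, hσw2, map_sub]
  have eσ22 : ρ σ (m (E B 2) (E B 2)) = m (E B 4) (E B 4) := by
    rw [hequiv, hσv1]; simp [map_neg, LinearMap.neg_apply]
  have eτ22 : ρ τ (m (E B 2) (E B 2)) = m (E B 4) (E B 4) := by rw [hequiv, hτv1]
  have eσ44 : ρ σ (m (E B 4) (E B 4)) =
      m (E B 2) (E B 2) - m (E B 2) (E B 4) - m (E B 2) (E B 4) + m (E B 4) (E B 4) := by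
    rw [hequiv, hσw1]
    simp only [map_sub, LinearMap.sub_apply]
    rw [hcomm (E B 4) (E B 2)]
    abel
  have eσ33 : ρ σ (m (E B 3) (E B 3)) = m (E B 5) (E B 5) := by
    rw [hequiv, hσv2]; simp [map_neg, LinearMap.neg_apply]
  have eτ33 : ρ τ (m (E B 3) (E B 3)) = m (E B 5) (E B 5) := by rw [hequiv, hτv2]
  have eσ55 : ρ σ (m (E B 5) (E B 5)) =
      m (E B 3) (E B 3) - m (E B 3) (E B 5) - m (E B 3) (E B 5) + m (E B 5) (E B 5) := by
    rw [hequiv, hσw2]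
    simp only [map_sub, LinearMap.sub_apply]
    rw [hcomm (E B 5) (E B 3)]
    abel
  have eσ23 : ρ σ (m (E B 2) (E B 3)) = m (E B 4) (E B 5) := by
    rw [hequiv, hσv1, hσv2]; simp [map_neg, LinearMap.neg_apply]
  have eτ23 : ρ τ (m (E B 2) (E B 3)) = m (E B 4) (E B 5) := by rw [hequiv, hτv1, hτv2]
  have eτ25 : ρ τ (m (E B 2) (E B 5)) = m (E B 3) (E B 4) := by
    rw [hequiv, hτv1, hτw2]; exact hcomm _ _
  have eσ25 : ρ σ (m (E B 2) (E B 5)) = m (E B 4) (E B 5) - m (E B 3) (E B 4) := by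
    rw [hequiv, hσv1, hσw2]
    simp only [map_sub, map_neg, LinearMap.neg_apply, LinearMap.sub_apply]
    rw [hcomm (E B 4) (E B 3)]
    abel
  -- ===== t·t =====
  have eA := eσ11.trans eτ11.symm
  rw [hS, hT] at eA
  have a1 := congrFun eA 1
  simp [E_apply] at a1
  have A1 : m (E B 1) (E B 1) 1 = 0 := h2can _ (by linear_combination a1)
  rw [hS] at eσ11
  have a2 := congrFun eσ11 2
  have a3 := congrFun eσ11 3
  have a4 := congrFun eσ11 4
  have a5 := congrFun eσ11 5
  simp [E_apply] at a2 a3 a4 a5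
  have A2 : m (E B 1) (E B 1) 2 = 0 := h3can _ (by linear_combination -a4 - 2*a2)
  have A3 : m (E B 1) (E B 1) 3 = 0 := h3can _ (by linear_combination -a5 - 2*a3)
  have A4 : m (E B 1) (E B 1) 4 = 0 := by linear_combination a2 + A2
  have A5 : m (E B 1) (E B 1) 5 = 0 := by linear_combination a3 + A3
  -- ===== t·v₁, t·w₁ =====
  have eB := eσ12.trans eτ12.symm
  rw [hS, hT] at eB
  have b1 := congrFun eB 1
  have b4 := congrFun eB 4
  have b5 := congrFun eB 5
  simp [E_apply] at b1 b4 b5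
  have B1 : m (E B 1) (E B 2) 1 = 0 := h2can _ (by linear_combination b1)
  have B4 : m (E B 1) (E B 2) 4 = -(2 * m (E B 1) (E B 2) 2) := by linear_combination -b4
  have B5 : m (E B 1) (E B 2) 5 = -(2 * m (E B 1) (E B 2) 3) := by linear_combination -b5
  rw [hT] at eτ12
  have k0 := congrFun eτ12 0
  have k1 := congrFun eτ12 1
  have k2 := congrFun eτ12 2
  have k3 := congrFun eτ12 3
  have k4 := congrFun eτ12 4
  have k5 := congrFun eτ12 5
  simp [E_apply] at k0 k1 k2 k3 k4 k5
  rw [hS] at eσ14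
  have s0 := congrFun eσ14 0
  simp [E_apply] at s0
  have B0 : m (E B 1) (E B 2) 0 = 0 := h3can _ (by linear_combination -s0 + 2*k0)
  have B'0 : m (E B 1) (E B 4) 0 = 0 := by linear_combination k0 - B0
  have B'1 : m (E B 1) (E B 4) 1 = 0 := by linear_combination -k1 + B1
  have B'2 : m (E B 1) (E B 4) 2 = 2 * m (E B 1) (E B 2) 2 := by linear_combination k2 - B4
  have B'3 : m (E B 1) (E B 4) 3 = 2 * m (E B 1) (E B 2) 3 := by linear_combination k3 - B5
  have B'4 : m (E B 1) (E B 4) 4 = -(m (E B 1) (E B 2) 2) := by linear_combination k4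
  have B'5 : m (E B 1) (E B 4) 5 = -(m (E B 1) (E B 2) 3) := by linear_combination k5
  -- ===== t·v₂, t·w₂ =====
  have eC := eσ13.trans eτ13.symm
  rw [hS, hT] at eC
  have c1 := congrFun eC 1
  have c4 := congrFun eC 4
  have c5 := congrFun eC 5
  simp [E_apply] at c1 c4 c5
  have C1 : m (E B 1) (E B 3) 1 = 0 := h2can _ (by linear_combination c1)
  have C4 : m (E B 1) (E B 3) 4 = -(2 * m (E B 1) (E B 3) 2) := by linear_combination -c4
  have C5 : m (E B 1) (E B 3) 5 = -(2 * m (E B 1) (E B 3) 3) := by linear_combination -c5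
  rw [hT] at eτ13
  have l0 := congrFun eτ13 0
  have l1 := congrFun eτ13 1
  have l2 := congrFun eτ13 2
  have l3 := congrFun eτ13 3
  have l4 := congrFun eτ13 4
  have l5 := congrFun eτ13 5
  simp [E_apply] at l0 l1 l2 l3 l4 l5
  rw [hS] at eσ15
  have s0' := congrFun eσ15 0
  simp [E_apply] at s0'
  have C0 : m (E B 1) (E B 3) 0 = 0 := h3can _ (by linear_combination -s0' + 2*l0)
  have C'0 : m (E B 1) (E B 5) 0 = 0 := by linear_combination l0 - C0
  have C'1 : m (E B 1) (E B 5) 1 = 0 := by linear_combination -l1 + C1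
  have C'2 : m (E B 1) (E B 5) 2 = 2 * m (E B 1) (E B 3) 2 := by linear_combination l2 - C4
  have C'3 : m (E B 1) (E B 5) 3 = 2 * m (E B 1) (E B 3) 3 := by linear_combination l3 - C5
  have C'4 : m (E B 1) (E B 5) 4 = -(m (E B 1) (E B 3) 2) := by linear_combination l4
  have C'5 : m (E B 1) (E B 5) 5 = -(m (E B 1) (E B 3) 3) := by linear_combination l5
  -- ===== v₁², w₁², v₁w₁ =====
  have eD := eσ22.trans eτ22.symm
  rw [hS, hT] at eD
  have d1 := congrFun eD 1
  have d4 := congrFun eD 4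
  have d5 := congrFun eD 5
  simp [E_apply] at d1 d4 d5
  have D1 : m (E B 2) (E B 2) 1 = 0 := h2can _ (by linear_combination d1)
  have D4 : m (E B 2) (E B 2) 4 = -(2 * m (E B 2) (E B 2) 2) := by linear_combination -d4
  have D5 : m (E B 2) (E B 2) 5 = -(2 * m (E B 2) (E B 2) 3) := by linear_combination -d5
  rw [hT] at eτ22
  have t0 := congrFun eτ22 0
  have t1 := congrFun eτ22 1
  have t2 := congrFun eτ22 2
  have t3 := congrFun eτ22 3
  have t4 := congrFun eτ22 4
  have t5 := congrFun eτ22 5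
  simp [E_apply] at t0 t1 t2 t3 t4 t5
  have W0 : m (E B 4) (E B 4) 0 = m (E B 2) (E B 2) 0 := t0.symm
  have W1 : m (E B 4) (E B 4) 1 = 0 := by linear_combination -t1 - D1
  have W2 : m (E B 4) (E B 4) 2 = -(2 * m (E B 2) (E B 2) 2) := by linear_combination -t2 + D4
  have W3 : m (E B 4) (E B 4) 3 = -(2 * m (E B 2) (E B 2) 3) := by linear_combination -t3 + D5
  have W4 : m (E B 4) (E B 4) 4 = m (E B 2) (E B 2) 2 := t4.symm
  have W5 : m (E B 4) (E B 4) 5 = m (E B 2) (E B 2) 3 := t5.symm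
  rw [hS] at eσ44
  have v0 := congrFun eσ44 0
  have v1 := congrFun eσ44 1
  have v2 := congrFun eσ44 2
  have v3 := congrFun eσ44 3
  have v4 := congrFun eσ44 4
  have v5 := congrFun eσ44 5
  simp [E_apply] at v0 v1 v2 v3 v4 v5
  have M0 : m (E B 2) (E B 4) 0 = 3 * ⅟(6:B) * m (E B 2) (E B 2) 0 := by
    linear_combination (3*⅟(6:B)) * (-v0) - m (E B 2) (E B 4) 0 * two_half
  have M1 : m (E B 2) (E B 4) 1 = 0 := by
    linear_combination (3*⅟(6:B)) * (-v1 + D1) - m (E B 2) (E B 4) 1 * two_half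
  have M2 : m (E B 2) (E B 4) 2 = -(m (E B 2) (E B 2) 2) := by
    linear_combination (3*⅟(6:B)) * (v2 - W4 + W2)
      - (m (E B 2) (E B 4) 2 + m (E B 2) (E B 2) 2) * two_half
  have M3 : m (E B 2) (E B 4) 3 = -(m (E B 2) (E B 2) 3) := by
    linear_combination (3*⅟(6:B)) * (v3 - W5 + W3)
      - (m (E B 2) (E B 4) 3 + m (E B 2) (E B 2) 3) * two_half
  have M4 : m (E B 2) (E B 4) 4 = -(m (E B 2) (E B 2) 2) := by
    linear_combination (3*⅟(6:B)) * (v4 + W2 + 2*W4 + D4)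
      - (m (E B 2) (E B 4) 4 + m (E B 2) (E B 2) 2) * two_half
  have M5 : m (E B 2) (E B 4) 5 = -(m (E B 2) (E B 2) 3) := by
    linear_combination (3*⅟(6:B)) * (v5 + W3 + 2*W5 + D5)
      - (m (E B 2) (E B 4) 5 + m (E B 2) (E B 2) 3) * two_half
  -- ===== v₂², w₂², v₂w₂ =====
  have eF := eσ33.trans eτ33.symm
  rw [hS, hT] at eF
  have f1 := congrFun eF 1
  have f4 := congrFun eF 4
  have f5 := congrFun eF 5
  simp [E_apply] at f1 f4 f5
  have F1 : m (E B 3) (E B 3) 1 = 0 := h2can _ (by linear_combination f1)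
  have F4 : m (E B 3) (E B 3) 4 = -(2 * m (E B 3) (E B 3) 2) := by linear_combination -f4
  have F5 : m (E B 3) (E B 3) 5 = -(2 * m (E B 3) (E B 3) 3) := by linear_combination -f5
  rw [hT] at eτ33
  have p0 := congrFun eτ33 0
  have p1 := congrFun eτ33 1
  have p2 := congrFun eτ33 2
  have p3 := congrFun eτ33 3
  have p4 := congrFun eτ33 4
  have p5 := congrFun eτ33 5
  simp [E_apply] at p0 p1 p2 p3 p4 p5
  have X0 : m (E B 5) (E B 5) 0 = m (E B 3) (E B 3) 0 := p0.symm
  have X1 : m (E B 5) (E B 5) 1 = 0 := by linear_combination -p1 - F1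
  have X2 : m (E B 5) (E B 5) 2 = -(2 * m (E B 3) (E B 3) 2) := by linear_combination -p2 + F4
  have X3 : m (E B 5) (E B 5) 3 = -(2 * m (E B 3) (E B 3) 3) := by linear_combination -p3 + F5
  have X4 : m (E B 5) (E B 5) 4 = m (E B 3) (E B 3) 2 := p4.symm
  have X5 : m (E B 5) (E B 5) 5 = m (E B 3) (E B 3) 3 := p5.symm
  rw [hS] at eσ55
  have w0 := congrFun eσ55 0
  have w1 := congrFun eσ55 1
  have w2 := congrFun eσ55 2
  have w3 := congrFun eσ55 3
  have w4 := congrFun eσ55 4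
  have w5 := congrFun eσ55 5
  simp [E_apply] at w0 w1 w2 w3 w4 w5
  have G0 : m (E B 3) (E B 5) 0 = 3 * ⅟(6:B) * m (E B 3) (E B 3) 0 := by
    linear_combination (3*⅟(6:B)) * (-w0) - m (E B 3) (E B 5) 0 * two_half
  have G1 : m (E B 3) (E B 5) 1 = 0 := by
    linear_combination (3*⅟(6:B)) * (-w1 + F1) - m (E B 3) (E B 5) 1 * two_half
  have G2 : m (E B 3) (E B 5) 2 = -(m (E B 3) (E B 3) 2) := by
    linear_combination (3*⅟(6:B)) * (w2 - X4 + X2)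
      - (m (E B 3) (E B 5) 2 + m (E B 3) (E B 3) 2) * two_half
  have G3 : m (E B 3) (E B 5) 3 = -(m (E B 3) (E B 3) 3) := by
    linear_combination (3*⅟(6:B)) * (w3 - X5 + X3)
      - (m (E B 3) (E B 5) 3 + m (E B 3) (E B 3) 3) * two_half
  have G4 : m (E B 3) (E B 5) 4 = -(m (E B 3) (E B 3) 2) := by
    linear_combination (3*⅟(6:B)) * (w4 + X2 + 2*X4 + F4)
      - (m (E B 3) (E B 5) 4 + m (E B 3) (E B 3) 2) * two_half
  have G5 : m (E B 3) (E B 5) 5 = -(m (E B 3) (E B 3) 3) := by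
    linear_combination (3*⅟(6:B)) * (w5 + X3 + 2*X5 + F5)
      - (m (E B 3) (E B 5) 5 + m (E B 3) (E B 3) 3) * two_half
  -- ===== v₁v₂, w₁w₂, v₁w₂, v₂w₁ =====
  have eE := eσ23.trans eτ23.symm
  rw [hS, hT] at eE
  have g1 := congrFun eE 1
  have g4 := congrFun eE 4
  have g5 := congrFun eE 5
  simp [E_apply] at g1 g4 g5
  have Q1 : m (E B 2) (E B 3) 1 = 0 := h2can _ (by linear_combination g1)
  have Q4 : m (E B 2) (E B 3) 4 = -(2 * m (E B 2) (E B 3) 2) := by linear_combination -g4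
  have Q5 : m (E B 2) (E B 3) 5 = -(2 * m (E B 2) (E B 3) 3) := by linear_combination -g5
  rw [hT] at eτ23
  have u0 := congrFun eτ23 0
  have u1 := congrFun eτ23 1
  have u2 := congrFun eτ23 2
  have u3 := congrFun eτ23 3
  have u4 := congrFun eτ23 4
  have u5 := congrFun eτ23 5
  simp [E_apply] at u0 u1 u2 u3 u4 u5
  have Y0 : m (E B 4) (E B 5) 0 = m (E B 2) (E B 3) 0 := u0.symm
  have Y1 : m (E B 4) (E B 5) 1 = 0 := by linear_combination -u1 - Q1
  have Y2 : m (E B 4) (E B 5) 2 = -(2 * m (E B 2) (E B 3) 2) := by linear_combination -u2 + Q4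
  have Y3 : m (E B 4) (E B 5) 3 = -(2 * m (E B 2) (E B 3) 3) := by linear_combination -u3 + Q5
  have Y4 : m (E B 4) (E B 5) 4 = m (E B 2) (E B 3) 2 := u4.symm
  have Y5 : m (E B 4) (E B 5) 5 = m (E B 2) (E B 3) 3 := u5.symm
  rw [hT] at eτ25
  have q0 := congrFun eτ25 0
  have q1 := congrFun eτ25 1
  have q2 := congrFun eτ25 2
  have q3 := congrFun eτ25 3
  have q4 := congrFun eτ25 4
  have q5 := congrFun eτ25 5
  simp [E_apply] at q0 q1 q2 q3 q4 q5
  rw [hS] at eσ25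
  have r0 := congrFun eσ25 0
  have r2 := congrFun eσ25 2
  have r3 := congrFun eσ25 3
  simp [E_apply] at r0 r2 r3
  have U0 : m (E B 2) (E B 5) 0 = 3 * ⅟(6:B) * m (E B 2) (E B 3) 0 := by
    linear_combination (3*⅟(6:B)) * (r0 + q0 + Y0) - m (E B 2) (E B 5) 0 * two_half
  have U4 : m (E B 2) (E B 5) 4 = -(m (E B 2) (E B 3) 2) := by
    linear_combination (3*⅟(6:B)) * (r2 + q2 + Y2)
      - (m (E B 2) (E B 5) 4 + m (E B 2) (E B 3) 2) * two_half
  have U5 : m (E B 2) (E B 5) 5 = -(m (E B 2) (E B 3) 3) := by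
    linear_combination (3*⅟(6:B)) * (r3 + q3 + Y3)
      - (m (E B 2) (E B 5) 5 + m (E B 2) (E B 3) 3) * two_half
  have V0 : m (E B 3) (E B 4) 0 = 3 * ⅟(6:B) * m (E B 2) (E B 3) 0 := by
    linear_combination U0 - q0
  have V1 : m (E B 3) (E B 4) 1 = -(m (E B 2) (E B 5) 1) := by linear_combination -q1
  have V2 : m (E B 3) (E B 4) 2 = -(m (E B 2) (E B 3) 2) := by linear_combination U4 - q2
  have V3 : m (E B 3) (E B 4) 3 = -(m (E B 2) (E B 3) 3) := by linear_combination U5 - q3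
  have V4 : m (E B 3) (E B 4) 4 = m (E B 2) (E B 5) 2 := q4.symm
  have V5 : m (E B 3) (E B 4) 5 = m (E B 2) (E B 5) 3 := q5.symm
  -- ===== conclusion =====
  refine ⟨m (E B 1) (E B 1) 0, m (E B 1) (E B 2) 2, m (E B 1) (E B 2) 3,
    m (E B 1) (E B 3) 2, m (E B 1) (E B 3) 3,
    m (E B 2) (E B 2) 0, m (E B 2) (E B 2) 2, m (E B 2) (E B 2) 3,
    m (E B 2) (E B 3) 0, m (E B 2) (E B 3) 2, m (E B 2) (E B 3) 3,
    m (E B 3) (E B 3) 0, m (E B 3) (E B 3) 2, m (E B 3) (E B 3) 3,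
    m (E B 2) (E B 5) 1, m (E B 2) (E B 5) 2, m (E B 2) (E B 5) 3,
    ?_, ?_, ?_, ?_, ?_, ?_, ?_, ?_, ?_, ?_, ?_, ?_, ?_, ?_, ?_⟩
  · conv_lhs => rw [Edecomp (m (E B 1) (E B 1))]
    rw [A1, A2, A3, A4, A5]; module
  · conv_lhs => rw [Edecomp (m (E B 1) (E B 2))]
    rw [B0, B1, B4, B5]; module
  · conv_lhs => rw [Edecomp (m (E B 1) (E B 3))]
    rw [C0, C1, C4, C5]; module
  · conv_lhs => rw [Edecomp (m (E B 1) (E B 4))]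
    rw [B'0, B'1, B'2, B'3, B'4, B'5]; module
  · conv_lhs => rw [Edecomp (m (E B 1) (E B 5))]
    rw [C'0, C'1, C'2, C'3, C'4, C'5]; module
  · conv_lhs => rw [Edecomp (m (E B 2) (E B 2))]
    rw [D1, D4, D5]; module
  · conv_lhs => rw [Edecomp (m (E B 2) (E B 3))]
    rw [Q1, Q4, Q5]; module
  · conv_lhs => rw [Edecomp (m (E B 3) (E B 3))]
    rw [F1, F4, F5]; module
  · conv_lhs => rw [Edecomp (m (E B 2) (E B 4))]
    rw [M0, M1, M2, M3, M4, M5]; module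
  · conv_lhs => rw [Edecomp (m (E B 2) (E B 5))]
    rw [U0, U4, U5]; module
  · conv_lhs => rw [Edecomp (m (E B 3) (E B 4))]
    rw [V0, V1, V2, V3, V4, V5]; module
  · conv_lhs => rw [Edecomp (m (E B 3) (E B 5))]
    rw [G0, G1, G2, G3, G4, G5]; module
  · conv_lhs => rw [Edecomp (m (E B 4) (E B 4))]
    rw [W0, W1, W2, W3, W4, W5]; module
  · conv_lhs => rw [Edecomp (m (E B 4) (E B 5))]
    rw [Y0, Y1, Y2, Y3, Y4, Y5]; module
  · conv_lhs => rw [Edecomp (m (E B 5) (E B 5))]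
    rw [X0, X1, X2, X3, X4, X5]; module
end
end

section
/- Let M be a module over R[S₃]. For i = 1, 2, 3 let M_i denote the image of the R-linear map m ↦ e_i·m. Then each M_i is an R[S₃]-submodule of M, and M is the internal direct sum M = M₁ ⊕ M₂ ⊕ M₃. -/
noncomputable section

/-- The image of a group element in the group ring `R[S₃]`. -/
def G (R : Type*) [CommRing R] (g : Equiv.Perm (Fin 3)) :
    MonoidAlgebra R (Equiv.Perm (Fin 3)) :=
  MonoidAlgebra.of R (Equiv.Perm (Fin 3)) g

/-- `e₁ = (1/6)(e + σ + σ² + τ + στ + σ²τ)` in `R[S₃]`. -/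
def e₁ (R : Type*) [CommRing R] [Invertible (6 : R)] :
    MonoidAlgebra R (Equiv.Perm (Fin 3)) :=
  ⅟(6:R) • (1 + G R σ + G R (σ^2) + G R τ + G R (σ*τ) + G R (σ^2*τ))

/-- `e₂ = (1/6)(e + σ + σ² - τ - στ - σ²τ)` in `R[S₃]`. -/
def e₂ (R : Type*) [CommRing R] [Invertible (6 : R)] :
    MonoidAlgebra R (Equiv.Perm (Fin 3)) :=
  ⅟(6:R) • (1 + G R σ + G R (σ^2) - G R τ - G R (σ*τ) - G R (σ^2*τ))

/-- `e₃ = (1/3)(2e - σ - σ²)` in `R[S₃]`; here `1/3 = 2 * (1/6)`. -/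
def e₃ (R : Type*) [CommRing R] [Invertible (6 : R)] :
    MonoidAlgebra R (Equiv.Perm (Fin 3)) :=
  (2 * ⅟(6:R)) • (2 - G R σ - G R (σ^2))

/-- `e₃₁ = (1/3)(e - σ + στ - σ²τ)` in `R[S₃]`. -/
def e₃₁ (R : Type*) [CommRing R] [Invertible (6 : R)] :
    MonoidAlgebra R (Equiv.Perm (Fin 3)) :=
  (2 * ⅟(6:R)) • (1 - G R σ + G R (σ*τ) - G R (σ^2*τ))

/-- `e₃₂ = (1/3)(e - σ² - στ + σ²τ)` in `R[S₃]`. -/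
def e₃₂ (R : Type*) [CommRing R] [Invertible (6 : R)] :
    MonoidAlgebra R (Equiv.Perm (Fin 3)) :=
  (2 * ⅟(6:R)) • (1 - G R (σ^2) - G R (σ*τ) + G R (σ^2*τ))

/-- The image of the `R`-linear map `m ↦ a • m` on an `R[S₃]`-module `M`,
as an `R`-submodule of `M`. -/
def eRange (R : Type*) [CommRing R] (M : Type*) [AddCommGroup M] [Module R M]
    [Module (MonoidAlgebra R (Equiv.Perm (Fin 3))) M]
    [IsScalarTower R (MonoidAlgebra R (Equiv.Perm (Fin 3))) M]
    (a : MonoidAlgebra R (Equiv.Perm (Fin 3))) : Submodule R M where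
  carrier := Set.range fun m : M => a • m
  zero_mem' := ⟨0, smul_zero a⟩
  add_mem' := by
    rintro _ _ ⟨x, rfl⟩ ⟨y, rfl⟩
    exact ⟨x + y, smul_add a x y⟩
  smul_mem' := by
    rintro r _ ⟨x, rfl⟩
    exact ⟨r • x, smul_comm a r x⟩

namespace Aux13

lemma m_1_1 : (σ : Equiv.Perm (Fin 3)) * (σ) = σ^2 := by decide
lemma m_1_2 : (σ : Equiv.Perm (Fin 3)) * (σ^2) = 1 := by decide
lemma m_1_3 : (σ : Equiv.Perm (Fin 3)) * (τ) = σ*τ := by decide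
lemma m_1_4 : (σ : Equiv.Perm (Fin 3)) * (σ*τ) = σ^2*τ := by decide
lemma m_1_5 : (σ : Equiv.Perm (Fin 3)) * (σ^2*τ) = τ := by decide
lemma m_2_1 : (σ^2 : Equiv.Perm (Fin 3)) * (σ) = 1 := by decide
lemma m_2_2 : (σ^2 : Equiv.Perm (Fin 3)) * (σ^2) = σ := by decide
lemma m_2_3 : (σ^2 : Equiv.Perm (Fin 3)) * (τ) = σ^2*τ := by decide
lemma m_2_4 : (σ^2 : Equiv.Perm (Fin 3)) * (σ*τ) = τ := by decide
lemma m_2_5 : (σ^2 : Equiv.Perm (Fin 3)) * (σ^2*τ) = σ*τ := by decide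
lemma m_3_1 : (τ : Equiv.Perm (Fin 3)) * (σ) = σ^2*τ := by decide
lemma m_3_2 : (τ : Equiv.Perm (Fin 3)) * (σ^2) = σ*τ := by decide
lemma m_3_3 : (τ : Equiv.Perm (Fin 3)) * (τ) = 1 := by decide
lemma m_3_4 : (τ : Equiv.Perm (Fin 3)) * (σ*τ) = σ^2 := by decide
lemma m_3_5 : (τ : Equiv.Perm (Fin 3)) * (σ^2*τ) = σ := by decide
lemma m_4_1 : (σ*τ : Equiv.Perm (Fin 3)) * (σ) = τ := by decide
lemma m_4_2 : (σ*τ : Equiv.Perm (Fin 3)) * (σ^2) = σ^2*τ := by decide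
lemma m_4_3 : (σ*τ : Equiv.Perm (Fin 3)) * (τ) = σ := by decide
lemma m_4_4 : (σ*τ : Equiv.Perm (Fin 3)) * (σ*τ) = 1 := by decide
lemma m_4_5 : (σ*τ : Equiv.Perm (Fin 3)) * (σ^2*τ) = σ^2 := by decide
lemma m_5_1 : (σ^2*τ : Equiv.Perm (Fin 3)) * (σ) = σ*τ := by decide
lemma m_5_2 : (σ^2*τ : Equiv.Perm (Fin 3)) * (σ^2) = τ := by decide
lemma m_5_3 : (σ^2*τ : Equiv.Perm (Fin 3)) * (τ) = σ^2 := by decide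
lemma m_5_4 : (σ^2*τ : Equiv.Perm (Fin 3)) * (σ*τ) = σ := by decide
lemma m_5_5 : (σ^2*τ : Equiv.Perm (Fin 3)) * (σ^2*τ) = 1 := by decide

lemma six_elems : ∀ g : Equiv.Perm (Fin 3),
    g = 1 ∨ g = σ ∨ g = σ^2 ∨ g = τ ∨ g = σ*τ ∨ g = σ^2*τ := by decide

variable (R : Type*) [CommRing R]

lemma Gm (g h : Equiv.Perm (Fin 3)) : G R g * G R h = G R (g*h) :=
  (map_mul (MonoidAlgebra.of R _) g h).symm
lemma G1 : G R 1 = 1 := map_one (MonoidAlgebra.of R _)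

def E1 : MonoidAlgebra R (Equiv.Perm (Fin 3)) :=
  1 + G R σ + G R (σ^2) + G R τ + G R (σ*τ) + G R (σ^2*τ)
def E2 : MonoidAlgebra R (Equiv.Perm (Fin 3)) :=
  1 + G R σ + G R (σ^2) - G R τ - G R (σ*τ) - G R (σ^2*τ)
def E3 : MonoidAlgebra R (Equiv.Perm (Fin 3)) := 2 - G R σ - G R (σ^2)

lemma two_eq : (2 : MonoidAlgebra R (Equiv.Perm (Fin 3))) = 1 + 1 := by norm_num

attribute [local simp] E1 E2 E3 two_eq mul_add add_mul mul_sub sub_mul Gm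
  m_1_1 m_1_2 m_1_3 m_1_4 m_1_5 m_2_1 m_2_2 m_2_3 m_2_4 m_2_5
  m_3_1 m_3_2 m_3_3 m_3_4 m_3_5 m_4_1 m_4_2 m_4_3 m_4_4 m_4_5
  m_5_1 m_5_2 m_5_3 m_5_4 m_5_5 G1

lemma hE11 : E1 R * E1 R = (6:R) • E1 R := by simp; module
lemma hE22 : E2 R * E2 R = (6:R) • E2 R := by simp; module
lemma hE33 : E3 R * E3 R = (3:R) • E3 R := by simp; module
lemma hE12 : E1 R * E2 R = 0 := by simp; module
lemma hE21 : E2 R * E1 R = 0 := by simp; module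
lemma hE13 : E1 R * E3 R = 0 := by simp; module
lemma hE31 : E3 R * E1 R = 0 := by simp; module
lemma hE23 : E2 R * E3 R = 0 := by simp; module
lemma hE32 : E3 R * E2 R = 0 := by simp; module
lemma hEsum : E1 R + E2 R + (2:R) • E3 R = (6:R) • 1 := by simp; module

lemma central1 (g : Equiv.Perm (Fin 3)) : G R g * E1 R = E1 R * G R g := by
  rcases six_elems g with h|h|h|h|h|h <;> subst h <;> simp <;> module
lemma central2 (g : Equiv.Perm (Fin 3)) : G R g * E2 R = E2 R * G R g := by
  rcases six_elems g with h|h|h|h|h|h <;> subst h <;> simp <;> module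
lemma central3 (g : Equiv.Perm (Fin 3)) : G R g * E3 R = E3 R * G R g := by
  rcases six_elems g with h|h|h|h|h|h <;> subst h <;> simp <;> module

variable [Invertible (6 : R)]

lemma he1 : e₁ R = ⅟(6:R) • E1 R := rfl
lemma he2 : e₂ R = ⅟(6:R) • E2 R := rfl
lemma he3 : e₃ R = (2 * ⅟(6:R)) • E3 R := rfl

lemma idem1 : e₁ R * e₁ R = e₁ R := by
  rw [he1, smul_mul_smul_comm, hE11, smul_smul, mul_assoc, invOf_mul_self, mul_one]
lemma idem2 : e₂ R * e₂ R = e₂ R := by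
  rw [he2, smul_mul_smul_comm, hE22, smul_smul, mul_assoc, invOf_mul_self, mul_one]
lemma idem3 : e₃ R * e₃ R = e₃ R := by
  rw [he3, smul_mul_smul_comm, hE33, smul_smul]
  congr 1
  linear_combination (2 * ⅟(6:R)) * invOf_mul_self (6:R)
lemma orth12 : e₁ R * e₂ R = 0 := by rw [he1, he2, smul_mul_smul_comm, hE12, smul_zero]
lemma orth21 : e₂ R * e₁ R = 0 := by rw [he1, he2, smul_mul_smul_comm, hE21, smul_zero]
lemma orth13 : e₁ R * e₃ R = 0 := by rw [he1, he3, smul_mul_smul_comm, hE13, smul_zero]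
lemma orth31 : e₃ R * e₁ R = 0 := by rw [he1, he3, smul_mul_smul_comm, hE31, smul_zero]
lemma orth23 : e₂ R * e₃ R = 0 := by rw [he2, he3, smul_mul_smul_comm, hE23, smul_zero]
lemma orth32 : e₃ R * e₂ R = 0 := by rw [he2, he3, smul_mul_smul_comm, hE32, smul_zero]

lemma esum : e₁ R + e₂ R + e₃ R = 1 := by
  rw [he1, he2, he3, mul_comm (2:R), ← smul_smul, ← smul_add, ← smul_add, hEsum,
    smul_smul, invOf_mul_self, one_smul]

lemma central_e (E : MonoidAlgebra R (Equiv.Perm (Fin 3)))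
    (hE : ∀ g, G R g * E = E * G R g) (a : MonoidAlgebra R (Equiv.Perm (Fin 3))) :
    a * E = E * a := by
  induction a using MonoidAlgebra.induction_on with
  | of g => exact hE g
  | add f g hf hg => rw [add_mul, mul_add, hf, hg]
  | smul r f hf => rw [smul_mul_assoc, mul_smul_comm, hf]

lemma central_e1 (a : MonoidAlgebra R (Equiv.Perm (Fin 3))) : a * e₁ R = e₁ R * a := by
  rw [he1, mul_smul_comm, smul_mul_assoc, central_e R _ (central1 R) a]
lemma central_e2 (a : MonoidAlgebra R (Equiv.Perm (Fin 3))) : a * e₂ R = e₂ R * a := by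
  rw [he2, mul_smul_comm, smul_mul_assoc, central_e R _ (central2 R) a]
lemma central_e3 (a : MonoidAlgebra R (Equiv.Perm (Fin 3))) : a * e₃ R = e₃ R * a := by
  rw [he3, mul_smul_comm, smul_mul_assoc, central_e R _ (central3 R) a]

end Aux13

set_option maxHeartbeats 1000000 in
set_option synthInstance.maxHeartbeats 400000 in
open Aux13 in
/-- Let `M` be a module over `R[S₃]`, and for `i = 1, 2, 3` let `Mᵢ`
be the image of the `R`-linear map `m ↦ eᵢ·m`.  Then each `Mᵢ` is stable under the
`R[S₃]`-action (it is an `R[S₃]`-submodule), and `M` is the internal direct sum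
`M = M₁ ⊕ M₂ ⊕ M₃`. -/
theorem statement13 (R : Type*) [CommRing R] [IsDomain R] [Invertible (6 : R)]
    (M : Type*) [AddCommGroup M] [Module R M]
    [Module (MonoidAlgebra R (Equiv.Perm (Fin 3))) M]
    [IsScalarTower R (MonoidAlgebra R (Equiv.Perm (Fin 3))) M] :
    (∀ i : Fin 3, ∀ a : MonoidAlgebra R (Equiv.Perm (Fin 3)), ∀ x : M,
      x ∈ ![eRange R M (e₁ R), eRange R M (e₂ R), eRange R M (e₃ R)] i →
        a • x ∈ ![eRange R M (e₁ R), eRange R M (e₂ R), eRange R M (e₃ R)] i) ∧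
    DirectSum.IsInternal ![eRange R M (e₁ R), eRange R M (e₂ R), eRange R M (e₃ R)] := by
  set el : Fin 3 → MonoidAlgebra R (Equiv.Perm (Fin 3)) := ![e₁ R, e₂ R, e₃ R] with hel
  have hA : ∀ i, ![eRange R M (e₁ R), eRange R M (e₂ R), eRange R M (e₃ R)] i
      = eRange R M (el i) := by
    intro i; fin_cases i <;> rfl
  have hcentral : ∀ i a, a * el i = el i * a := by
    intro i a; fin_cases i
    · exact central_e1 R a
    · exact central_e2 R a
    · exact central_e3 R a
  have hidem : ∀ i, el i * el i = el i := by
    intro i; fin_cases i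
    · exact idem1 R
    · exact idem2 R
    · exact idem3 R
  have horth : ∀ i j, i ≠ j → el i * el j = 0 := by
    intro i j hij
    fin_cases i <;> fin_cases j
    · exact absurd rfl hij
    · exact orth12 R
    · exact orth13 R
    · exact orth21 R
    · exact absurd rfl hij
    · exact orth23 R
    · exact orth31 R
    · exact orth32 R
    · exact absurd rfl hij
  have hsum : el 0 + el 1 + el 2 = 1 := esum R
  -- projections
  have hproj : ∀ i j (x : M), x ∈ eRange R M (el j) →
      el i • x = if i = j then x else 0 := by
    rintro i j x ⟨y, rfl⟩
    show el i • el j • y = _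
    rw [← mul_smul]
    by_cases h : i = j
    · subst h; rw [hidem, if_pos rfl]
    · rw [horth i j h, if_neg h, zero_smul]
  constructor
  · intro i a x hx
    rw [hA] at hx ⊢
    obtain ⟨y, rfl⟩ := hx
    exact ⟨a • y, by rw [← mul_smul, hcentral, mul_smul]⟩
  · constructor
    · rw [injective_iff_map_eq_zero]
      intro f hf
      have hcoe : ∀ j, (f j : M) ∈ eRange R M (el j) := by
        intro j; rw [← hA]; exact (f j).2
      have hrep : (DirectSum.coeAddMonoidHom
          ![eRange R M (e₁ R), eRange R M (e₂ R), eRange R M (e₃ R)]) f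
          = (f 0 : M) + (f 1 : M) + (f 2 : M) := by
        conv_lhs => rw [← DirectSum.sum_univ_of f]
        rw [map_sum, Fin.sum_univ_three, DirectSum.coeAddMonoidHom_of,
          DirectSum.coeAddMonoidHom_of, DirectSum.coeAddMonoidHom_of]
      have hs : (f 0 : M) + (f 1 : M) + (f 2 : M) = 0 := by rw [← hrep, hf]
      have hz : ∀ i, (f i : M) = 0 := by
        intro i
        have h2 := congrArg (fun m : M => el i • m) hs
        simp only [smul_add, smul_zero, hproj i 0 _ (hcoe 0), hproj i 1 _ (hcoe 1),
          hproj i 2 _ (hcoe 2)] at h2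
        fin_cases i <;> simpa using h2
      refine DFunLike.ext _ _ fun i => ?_
      rw [DirectSum.zero_apply]
      exact Subtype.ext ((hz i).trans (ZeroMemClass.coe_zero _).symm)
    · intro m
      have hm : m = (e₁ R) • m + (e₂ R) • m + (e₃ R) • m := by
        rw [← add_smul, ← add_smul, esum R, one_smul]
      refine ⟨DirectSum.of (fun i =>
            (![eRange R M (e₁ R), eRange R M (e₂ R), eRange R M (e₃ R)] i : Submodule R M)) 0
            ⟨(e₁ R) • m, ⟨m, rfl⟩⟩
          + DirectSum.of _ 1 ⟨(e₂ R) • m, ⟨m, rfl⟩⟩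
          + DirectSum.of _ 2 ⟨(e₃ R) • m, ⟨m, rfl⟩⟩, ?_⟩
      rw [map_add, map_add, DirectSum.coeAddMonoidHom_of, DirectSum.coeAddMonoidHom_of,
        DirectSum.coeAddMonoidHom_of]
      exact hm.symm
end
end

section
/- Let M be a module over R[S₃]. Let M₃ denote the image of the R-linear map m ↦ e₃·m, and let M₃₁, M₃₂ denote the images of the R-linear maps m ↦ e₃₁·m and m ↦ e₃₂·m respectively. Then M₃₁ and M₃₂ are R-submodules of M₃, and M₃ is the internal direct sum M₃ = M₃₁ ⊕ M₃₂ of R-modules. -/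
noncomputable section

section Aux
set_option linter.unusedSectionVars false

variable (R : Type*) [CommRing R] [Invertible (6 : R)]

lemma Gmul (g h : Equiv.Perm (Fin 3)) : G R g * G R h = G R (g * h) :=
  (map_mul (MonoidAlgebra.of R (Equiv.Perm (Fin 3))) g h).symm

lemma G1 : G R 1 = 1 := map_one (MonoidAlgebra.of R (Equiv.Perm (Fin 3)))

lemma mt1 : σ * σ = σ^2 := by decide
lemma mt2 : σ * σ^2 = 1 := by decide
lemma mt3 : σ * (σ*τ) = σ^2*τ := by decide
lemma mt4 : σ * (σ^2*τ) = τ := by decide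
lemma mt5 : σ^2 * σ = 1 := by decide
lemma mt6 : σ^2 * σ^2 = σ := by decide
lemma mt7 : σ^2 * (σ*τ) = τ := by decide
lemma mt8 : σ^2 * (σ^2*τ) = σ*τ := by decide
lemma mt9 : τ * σ = σ^2*τ := by decide
lemma mt10 : τ * σ^2 = σ*τ := by decide
lemma mt11 : τ * τ = 1 := by decide
lemma mt12 : τ * (σ*τ) = σ^2 := by decide
lemma mt13 : τ * (σ^2*τ) = σ := by decide
lemma mt14 : (σ*τ) * σ = τ := by decide
lemma mt15 : (σ*τ) * σ^2 = σ^2*τ := by decide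
lemma mt16 : (σ*τ) * τ = σ := by decide
lemma mt17 : (σ*τ) * (σ*τ) = 1 := by decide
lemma mt18 : (σ*τ) * (σ^2*τ) = σ^2 := by decide
lemma mt19 : (σ^2*τ) * σ = σ*τ := by decide
lemma mt20 : (σ^2*τ) * σ^2 = τ := by decide
lemma mt21 : (σ^2*τ) * τ = σ^2 := by decide
lemma mt22 : (σ^2*τ) * (σ*τ) = σ := by decide
lemma mt23 : (σ^2*τ) * (σ^2*τ) = 1 := by decide

lemma two_eq : (2 : MonoidAlgebra R (Equiv.Perm (Fin 3))) = 1 + 1 :=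
  one_add_one_eq_two.symm

lemma c_mul_three : (2 * ⅟(6:R)) * (2 * ⅟(6:R)) * 3 = 2 * ⅟(6:R) := by
  rw [mul_assoc,
    show (2 * ⅟(6:R)) * (3:R) = 1 from by
      rw [mul_right_comm, show (2:R) * 3 = 6 from by norm_num, mul_invOf_self],
    mul_one]

lemma key31 : e₃ R * e₃₁ R = e₃₁ R := by
  rw [e₃, e₃₁, smul_mul_smul_comm]
  rw [show (2 - G R σ - G R (σ^2)) * (1 - G R σ + G R (σ*τ) - G R (σ^2*τ))
      = (3:R) • (1 - G R σ + G R (σ*τ) - G R (σ^2*τ)) from ?_]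
  · rw [smul_smul, c_mul_three]
  · simp only [mul_sub, mul_add, sub_mul, add_mul, one_mul, mul_one, Gmul,
      mt1, mt2, mt3, mt4, mt5, mt6, mt7, mt8, mt9, mt10, mt11, mt12, mt13,
      mt14, mt15, mt16, mt17, mt18, mt19, mt20, mt21, mt22, mt23, G1, two_eq]
    rw [show (3:R) = 1+1+1 from by norm_num]
    simp only [add_smul, one_smul]
    abel

lemma key32 : e₃ R * e₃₂ R = e₃₂ R := by
  rw [e₃, e₃₂, smul_mul_smul_comm]
  rw [show (2 - G R σ - G R (σ^2)) * (1 - G R (σ^2) - G R (σ*τ) + G R (σ^2*τ))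
      = (3:R) • (1 - G R (σ^2) - G R (σ*τ) + G R (σ^2*τ)) from ?_]
  · rw [smul_smul, c_mul_three]
  · simp only [mul_sub, mul_add, sub_mul, add_mul, one_mul, mul_one, Gmul,
      mt1, mt2, mt3, mt4, mt5, mt6, mt7, mt8, mt9, mt10, mt11, mt12, mt13,
      mt14, mt15, mt16, mt17, mt18, mt19, mt20, mt21, mt22, mt23, G1, two_eq]
    rw [show (3:R) = 1+1+1 from by norm_num]
    simp only [add_smul, one_smul]
    abel

lemma idem31 : e₃₁ R * e₃₁ R = e₃₁ R := by
  rw [e₃₁, smul_mul_smul_comm]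
  rw [show (1 - G R σ + G R (σ*τ) - G R (σ^2*τ)) * (1 - G R σ + G R (σ*τ) - G R (σ^2*τ))
      = (3:R) • (1 - G R σ + G R (σ*τ) - G R (σ^2*τ)) from ?_]
  · rw [smul_smul, c_mul_three]
  · simp only [mul_sub, mul_add, sub_mul, add_mul, one_mul, mul_one, Gmul,
      mt1, mt2, mt3, mt4, mt5, mt6, mt7, mt8, mt9, mt10, mt11, mt12, mt13,
      mt14, mt15, mt16, mt17, mt18, mt19, mt20, mt21, mt22, mt23, G1, two_eq]
    rw [show (3:R) = 1+1+1 from by norm_num]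
    simp only [add_smul, one_smul]
    abel

lemma orth : e₃₁ R * e₃₂ R = 0 := by
  rw [e₃₁, e₃₂, smul_mul_smul_comm]
  rw [show (1 - G R σ + G R (σ*τ) - G R (σ^2*τ)) * (1 - G R (σ^2) - G R (σ*τ) + G R (σ^2*τ))
      = 0 from ?_]
  · rw [smul_zero]
  · simp only [mul_sub, mul_add, sub_mul, add_mul, one_mul, mul_one, Gmul,
      mt1, mt2, mt3, mt4, mt5, mt6, mt7, mt8, mt9, mt10, mt11, mt12, mt13,
      mt14, mt15, mt16, mt17, mt18, mt19, mt20, mt21, mt22, mt23, G1, two_eq]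
    abel

lemma sum_eq : e₃₁ R + e₃₂ R = e₃ R := by
  rw [e₃₁, e₃₂, e₃, ← smul_add]
  congr 1
  rw [two_eq]
  abel

end Aux

/-- Let `M` be a module over `R[S₃]`; let `M₃`, `M₃₁`, `M₃₂` be the
images of the `R`-linear maps `m ↦ e₃·m`, `m ↦ e₃₁·m`, `m ↦ e₃₂·m` respectively.
Then `M₃₁` and `M₃₂` are `R`-submodules of `M₃`, and `M₃` is their internal direct sum:
`M₃₁ ⊓ M₃₂ = 0` and `M₃₁ ⊔ M₃₂ = M₃`. -/
theorem statement14 (R : Type*) [CommRing R] [IsDomain R] [Invertible (6 : R)]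
    (M : Type*) [AddCommGroup M] [Module R M]
    [Module (MonoidAlgebra R (Equiv.Perm (Fin 3))) M]
    [IsScalarTower R (MonoidAlgebra R (Equiv.Perm (Fin 3))) M] :
    eRange R M (e₃₁ R) ≤ eRange R M (e₃ R) ∧
    eRange R M (e₃₂ R) ≤ eRange R M (e₃ R) ∧
    Disjoint (eRange R M (e₃₁ R)) (eRange R M (e₃₂ R)) ∧
    eRange R M (e₃₁ R) ⊔ eRange R M (e₃₂ R) = eRange R M (e₃ R) := by
  have h1 : eRange R M (e₃₁ R) ≤ eRange R M (e₃ R) := by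
    rintro _ ⟨m, rfl⟩
    exact ⟨e₃₁ R • m, by show e₃ R • (e₃₁ R • m) = e₃₁ R • m; rw [← mul_smul, key31]⟩
  have h2 : eRange R M (e₃₂ R) ≤ eRange R M (e₃ R) := by
    rintro _ ⟨m, rfl⟩
    exact ⟨e₃₂ R • m, by show e₃ R • (e₃₂ R • m) = e₃₂ R • m; rw [← mul_smul, key32]⟩
  refine ⟨h1, h2, ?_, ?_⟩
  · rw [disjoint_iff_inf_le]
    rintro x ⟨hx1, hx2⟩
    obtain ⟨a, ha⟩ := hx1
    obtain ⟨b, hb⟩ := hx2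
    dsimp only at ha hb
    have : x = 0 := by
      calc x = e₃₁ R • a := ha.symm
        _ = (e₃₁ R * e₃₁ R) • a := by rw [idem31]
        _ = e₃₁ R • (e₃₁ R • a) := by rw [mul_smul]
        _ = e₃₁ R • (e₃₂ R • b) := by rw [ha, hb]
        _ = (e₃₁ R * e₃₂ R) • b := by rw [mul_smul]
        _ = 0 := by rw [orth, zero_smul]
    simp [this]
  · refine le_antisymm (sup_le h1 h2) ?_
    rintro _ ⟨m, rfl⟩
    have : e₃ R • m = e₃₁ R • m + e₃₂ R • m := by
      rw [← add_smul, sum_eq]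
    show e₃ R • m ∈ eRange R M (e₃₁ R) ⊔ eRange R M (e₃₂ R)
    rw [this]
    exact Submodule.add_mem _ (Submodule.mem_sup_left ⟨m, rfl⟩)
      (Submodule.mem_sup_right ⟨m, rfl⟩)
end
end

section
/- Let X be a topological space, let F be a sheaf of abelian groups on X, and let f : F → F be a morphism of sheaves satisfying f ∘ f = f. Then the image presheaf of f, i.e., the subpresheaf of F given by U ↦ (f_U)(F(U)), satisfies the sheaf condition (it is a sheaf). -/
open CategoryTheory CategoryTheory.GrothendieckTopology

/-- Let `X` be a topological space, `F` a sheaf of abelian groups on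
`X`, and `f : F → F` a morphism of sheaves of abelian groups with `f ∘ f = f`.  Then the
image presheaf of `f` (the subpresheaf of `F` assigning to each open `U` the range of
`f_U : F(U) → F(U)`) satisfies the sheaf condition. -/
theorem statement16 (X : TopCat) (F : TopCat.Sheaf AddCommGrpCat X)
    (f : F.1 ⟶ F.1) (hf : f ≫ f = f) :
    TopCat.Presheaf.IsSheaf
      ((Subfunctor.range (Functor.whiskerRight f (forget AddCommGrpCat))).toFunctor) := by
  let J := Opens.grothendieckTopology X
  let φ := Functor.whiskerRight f (forget AddCommGrpCat)
  -- the underlying type-valued presheaf of `F` is a sheaf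
  have hF : Presieve.IsSheaf J (F.1 ⋙ forget AddCommGrpCat) := by
    exact Presieve.isSheaf_iso J
      (Functor.isoWhiskerLeft F.1 AddCommGrpCat.coyonedaObjIsoForget)
      (F.cond (AddCommGrpCat.of (ULift ℤ)))
  -- idempotency elementwise: `φ` fixes its range
  have hfix : ∀ (U) (x : (F.1 ⋙ forget AddCommGrpCat).obj U),
      x ∈ Set.range (φ.app U) → φ.app U x = x := by
    rintro U _ ⟨y, rfl⟩
    have := congrArg (fun g => (Functor.whiskerRight g (forget AddCommGrpCat)).app U y) hf
    simpa [φ] using this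
  show CategoryTheory.Presheaf.IsSheaf J _
  rw [CategoryTheory.isSheaf_iff_isSheaf_of_type,
    (Subfunctor.range φ).isSheaf_iff hF]
  intro U s hs
  -- it suffices to show `φ.app U s = s`
  refine ⟨s, ?_⟩
  apply (hF _ hs).isSeparatedFor.ext
  intro V i hi
  have hnat := types_congr_hom (φ.naturality i.op) s
  dsimp at hnat hi ⊢
  rw [← hnat]
  exact hfix _ _ hi
end
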